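/- arXiv:1911.10234 — 8 statements merged into one kernel-verified Lean document; each statement's English description precedes it below -/
import Mathlib

section
/- Let T be a finite tree and P an automorphism of T. If u and v are adjacent vertices of T, and p and q denote the cardinalities of the orbits of u and of v under the cyclic group generated by P, then p divides q or q divides p. -/
open SimpleGraph

lemma geodesic_avoid {V : Type*} [DecidableEq V] {G : SimpleGraph V} (hconn : G.Connected) {r x w : V}
    (p : G.Walk r x) (hl : p.length = G.dist r x) (hle : G.dist r x ≤ G.dist r w)
    (hne : w ≠ x) : w ∉ p.support := by
  intro hw
  have h1 := G.dist_le (p.takeUntil w hw)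
  have h2 := G.dist_le (p.dropUntil w hw)
  have h3 : (p.takeUntil w hw).length + (p.dropUntil w hw).length = p.length := by
    rw [← SimpleGraph.Walk.length_append, SimpleGraph.Walk.take_spec]
  have h4 : G.dist w x = 0 := by omega
  exact hne ((hconn.dist_eq_zero_iff).mp h4)

lemma edge_not_mem_of_not_mem_support {V : Type*} {G : SimpleGraph V} {r x w y : V}
    {p : G.Walk r x} (hw : w ∉ p.support) : s(y, w) ∉ p.edges := by
  intro he
  exact hw (SimpleGraph.Walk.snd_mem_support_of_mem_edges p he)

lemma tree_dist_ne {V : Type*} {G : SimpleGraph V} (hG : G.IsTree) (r : V) {x w : V}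
    (hx : G.Adj x w) : G.dist r x ≠ G.dist r w := by
  classical
  intro heq
  have hconn := hG.isConnected
  obtain ⟨px, hpx⟩ := (hconn.preconnected r x).exists_walk_length_eq_dist
  obtain ⟨pw, hpw⟩ := (hconn.preconnected r w).exists_walk_length_eq_dist
  have hwx : w ∉ px.support := geodesic_avoid hconn px hpx heq.le hx.ne'
  have hxw : x ∉ pw.support := geodesic_avoid hconn pw hpw heq.ge hx.ne
  have hbr := (SimpleGraph.isAcyclic_iff_forall_adj_isBridge.mp hG.IsAcyclic) hx
  rw [SimpleGraph.isBridge_iff] at hbr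
  apply hbr
  rw [SimpleGraph.reachable_delete_edges_iff_exists_walk]
  refine ⟨px.reverse.append pw, ?_⟩
  rw [SimpleGraph.Walk.edges_append, SimpleGraph.Walk.edges_reverse]
  intro hmem
  rcases List.mem_append.mp hmem with h | h
  · exact edge_not_mem_of_not_mem_support hwx (List.mem_reverse.mp h)
  · exact hxw (SimpleGraph.Walk.fst_mem_support_of_mem_edges pw h)

lemma tree_parent_unique {V : Type*} {G : SimpleGraph V} (hG : G.IsTree) (r : V) {x y w : V}
    (hx : G.Adj x w) (hy : G.Adj y w) (hdx : G.dist r x < G.dist r w)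
    (hdy : G.dist r y < G.dist r w) : x = y := by
  classical
  by_contra hxy
  have hconn := hG.isConnected
  obtain ⟨px, hpx⟩ := (hconn.preconnected r x).exists_walk_length_eq_dist
  obtain ⟨py, hpy⟩ := (hconn.preconnected r y).exists_walk_length_eq_dist
  have hwx : w ∉ px.support := geodesic_avoid hconn px hpx hdx.le (fun h => by subst h; omega)
  have hwy : w ∉ py.support := geodesic_avoid hconn py hpy hdy.le (fun h => by subst h; omega)
  have hbr := (SimpleGraph.isAcyclic_iff_forall_adj_isBridge.mp hG.IsAcyclic) hx
  rw [SimpleGraph.isBridge_iff] at hbr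
  apply hbr
  rw [SimpleGraph.reachable_delete_edges_iff_exists_walk]
  refine ⟨px.reverse.append (py.concat hy), ?_⟩
  rw [SimpleGraph.Walk.edges_append, SimpleGraph.Walk.edges_reverse, SimpleGraph.Walk.edges_concat]
  intro hmem
  rcases List.mem_append.mp hmem with h | h
  · exact edge_not_mem_of_not_mem_support hwx (List.mem_reverse.mp h)
  · rw [List.concat_eq_append] at h
    rcases List.mem_append.mp h with h' | h'
    · exact edge_not_mem_of_not_mem_support hwy h'
    · simp only [List.mem_singleton, Sym2.eq, Sym2.rel_iff', Prod.mk.injEq, Prod.swap_prod_mk] at h'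
      rcases h' with ⟨h1, _⟩ | ⟨h1, h2⟩
      · exact hxy h1
      · exact hx.ne h1

lemma lcm_le_add_imp_dvd {a b : ℕ} (ha : 0 < a) (hb : 0 < b)
    (h : Nat.lcm a b ≤ a + b) : a ∣ b ∨ b ∣ a := by
  obtain g : ℕ := Nat.gcd a b
  have hg0 : 0 < Nat.gcd a b := Nat.gcd_pos_of_pos_left _ ha
  set g := Nat.gcd a b with hg
  set a' := a / g with ha'd
  set b' := b / g with hb'd
  have ha' : a = g * a' := (Nat.mul_div_cancel' (Nat.gcd_dvd_left a b)).symm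
  have hb' : b = g * b' := (Nat.mul_div_cancel' (Nat.gcd_dvd_right a b)).symm
  have hco : Nat.Coprime a' b' := Nat.coprime_div_gcd_div_gcd hg0
  have hlcm : Nat.lcm a b = g * (a' * b') := by
    have h1 : g * Nat.lcm a b = a * b := Nat.gcd_mul_lcm a b
    have h2 : a * b = g * (g * (a' * b')) := by rw [ha', hb']; ring
    rw [h2] at h1
    exact Nat.eq_of_mul_eq_mul_left hg0 h1
  have hab : a' * b' ≤ a' + b' := by
    have h2 : g * (a' * b') ≤ g * (a' + b') := by
      rw [← hlcm, Nat.mul_add, ← ha', ← hb']; exact h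
    exact Nat.le_of_mul_le_mul_left h2 hg0
  by_contra hn
  push_neg at hn
  have ha1 : a' ≠ 1 := by
    intro h1; exact hn.1 (by rw [ha', h1, Nat.mul_one]; exact Nat.gcd_dvd_right a b)
  have hb1 : b' ≠ 1 := by
    intro h1; exact hn.2 (by rw [hb', h1, Nat.mul_one]; exact Nat.gcd_dvd_left a b)
  have ha0 : 0 < a' := Nat.div_pos (Nat.le_of_dvd ha (Nat.gcd_dvd_left a b)) hg0
  have hb0 : 0 < b' := Nat.div_pos (Nat.le_of_dvd hb (Nat.gcd_dvd_right a b)) hg0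
  have ha2 : 2 ≤ a' := by omega
  have hb2 : 2 ≤ b' := by omega
  have heq : a' * b' = a' + b' := by nlinarith
  have hdvd : a' ∣ b' := (Nat.dvd_add_right (dvd_refl a')).mp (heq ▸ Dvd.intro b' rfl)
  have h1 : a' = 1 := Nat.dvd_one.mp (hco ▸ Nat.dvd_gcd (dvd_refl a') hdvd)
  omega

/-- Let `T` be a finite tree and `P` an automorphism of `T`. If `u` and `v`
are adjacent vertices of `T`, and `p` and `q` denote the cardinalities of the orbits of `u`
and of `v` under the cyclic group generated by `P`, then `p ∣ q` or `q ∣ p`. -/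
theorem stmt_0 {V : Type*} [Fintype V] (G : SimpleGraph V) (hG : G.IsTree)
    (P : Equiv.Perm V) (hP : ∀ x y : V, G.Adj x y ↔ G.Adj (P x) (P y))
    (u v : V) (huv : G.Adj u v)
    (p q : ℕ)
    (hp : p = (Set.range fun k : ℤ => (P ^ k) u).ncard)
    (hq : q = (Set.range fun k : ℤ => (P ^ k) v).ncard) :
    p ∣ q ∨ q ∣ p := by
  classical
  set a := Function.minimalPeriod (P • ·) u with haa
  set b := Function.minimalPeriod (P • ·) v with hbb
  have key : ∀ w : V, (Set.range fun k : ℤ => (P ^ k) w).ncard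
      = Function.minimalPeriod (P • ·) w := by
    intro w
    have orbit_eq : (Set.range fun k : ℤ => (P ^ k) w)
        = MulAction.orbit (Subgroup.zpowers P) w := by
      ext x
      constructor
      · rintro ⟨k, rfl⟩
        exact ⟨⟨P ^ k, Subgroup.zpow_mem_zpowers P k⟩, rfl⟩
      · rintro ⟨⟨g, k, rfl⟩, rfl⟩
        exact ⟨k, rfl⟩
    haveI : Fintype (MulAction.orbit (Subgroup.zpowers P) w) := Fintype.ofFinite _
    rw [orbit_eq, MulAction.minimalPeriod_eq_card, ← Nat.card_coe_set_eq,
      Nat.card_eq_fintype_card]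
  have hpa : p = a := by rw [hp, key]
  have hqb : q = b := by rw [hq, key]
  have ha0 : 0 < a := by
    rw [← hpa, hp]
    rw [Set.ncard_pos (Set.toFinite _)]
    exact ⟨u, ⟨0, by simp⟩⟩
  have hb0 : 0 < b := by
    rw [← hqb, hq]
    rw [Set.ncard_pos (Set.toFinite _)]
    exact ⟨v, ⟨0, by simp⟩⟩
  by_cases hint : ∃ k m : ℤ, (P ^ k) u = (P ^ m) v
  · -- the two orbits coincide, so p = q
    obtain ⟨k, m, hkm⟩ := hint
    have hv : v = (P ^ (k - m)) u := by
      have h1 : (P ^ (k - m)) u = (P ^ (-m)) ((P ^ k) u) := by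
        rw [← Equiv.Perm.mul_apply, ← zpow_add]
        congr 1
        ring
      rw [h1, hkm, ← Equiv.Perm.mul_apply, ← zpow_add]
      simp
    have hrange : (Set.range fun j : ℤ => (P ^ j) v)
        = (Set.range fun j : ℤ => (P ^ j) u) := by
      ext x
      constructor
      · rintro ⟨j, rfl⟩
        refine ⟨j + (k - m), ?_⟩
        show (P ^ (j + (k - m))) u = (P ^ j) v
        rw [hv, ← Equiv.Perm.mul_apply, ← zpow_add]
      · rintro ⟨j, rfl⟩
        refine ⟨j - (k - m), ?_⟩
        show (P ^ (j - (k - m))) v = (P ^ j) u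
        rw [hv, ← Equiv.Perm.mul_apply, ← zpow_add]
        congr 1
        ring
    left
    rw [hp, hq, hrange]
  · push_neg at hint
    have hAdj : ∀ n : ℕ, G.Adj ((P ^ n) u) ((P ^ n) v) := by
      intro n
      induction n with
      | zero => simpa using huv
      | succ n ih =>
        have h1 : (P ^ (n + 1) : Equiv.Perm V) = P * P ^ n := by
          rw [pow_succ']
        rw [h1]
        simpa using (hP _ _).mp ih
    set L := Nat.lcm a b with hL
    have hL0 : 0 < L := Nat.lcm_pos ha0 hb0
    have hNe : ∀ n : ℕ, G.dist u ((P ^ n) u) ≠ G.dist u ((P ^ n) v) :=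
      fun n => tree_dist_ne hG u (hAdj n)
    set far : ℕ → V := fun n =>
      if G.dist u ((P ^ n) u) < G.dist u ((P ^ n) v) then (P ^ n) v else (P ^ n) u with hfar
    -- from equality of both coordinates, indices agree mod L
    have hfix : ∀ (w : V) (n m : ℕ), n ≤ m → (P ^ n) w = (P ^ m) w →
        Function.minimalPeriod (P • ·) w ∣ m - n := by
      intro w n m hle hw
      have e2 : (P ^ n) ((P ^ (m - n)) w) = (P ^ n) w := by
        rw [← Equiv.Perm.mul_apply, ← pow_add]
        have h3 : n + (m - n) = m := by omega
        rw [h3, ← hw]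
      have e3 : (P ^ (m - n)) w = w := (Equiv.injective _) e2
      have := (MulAction.pow_smul_eq_iff_minimalPeriod_dvd (a := P) (b := w) (n := m - n))
      simp only [Equiv.Perm.smul_def] at this
      exact this.mp e3
    have hkey2 : ∀ n m : ℕ, n < L → m < L → (P ^ n) u = (P ^ m) u →
        (P ^ n) v = (P ^ m) v → n = m := by
      have main : ∀ n m : ℕ, n ≤ m → m < L → (P ^ n) u = (P ^ m) u →
          (P ^ n) v = (P ^ m) v → n = m := by
        intro n m hle hm h1 h2
        have d1 : a ∣ m - n := hfix u n m hle h1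
        have d2 : b ∣ m - n := hfix v n m hle h2
        have d3 : L ∣ m - n := Nat.lcm_dvd d1 d2
        have : m - n = 0 := Nat.eq_zero_of_dvd_of_lt d3 (by omega) |>.symm ▸ rfl
        omega
      intro n m hn hm h1 h2
      rcases le_total n m with hle | hle
      · exact main n m hle hm h1 h2
      · exact (main m n hle hn h1.symm h2.symm).symm
    have hinj : ∀ n m : ℕ, n < L → m < L → far n = far m → n = m := by
      intro n m hn hm hf
      by_cases c1 : G.dist u ((P ^ n) u) < G.dist u ((P ^ n) v) <;>
        by_cases c2 : G.dist u ((P ^ m) u) < G.dist u ((P ^ m) v)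
      · -- far n = (P^n) v, far m = (P^m) v
        have hf' : (P ^ n) v = (P ^ m) v := by simpa [hfar, c1, c2] using hf
        have hadjm : G.Adj ((P ^ m) u) ((P ^ n) v) := hf' ▸ hAdj m
        have hu' : (P ^ n) u = (P ^ m) u :=
          tree_parent_unique hG u (hAdj n) hadjm c1 (hf' ▸ c2)
        exact hkey2 n m hn hm hu' hf'
      · exfalso
        have hf' : (P ^ n) v = (P ^ m) u := by simpa [hfar, c1, c2] using hf
        exact hint m n (by simpa [zpow_natCast] using hf'.symm)
      · exfalso
        have hf' : (P ^ n) u = (P ^ m) v := by simpa [hfar, c1, c2] using hf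
        exact hint n m (by simpa [zpow_natCast] using hf')
      · have hf' : (P ^ n) u = (P ^ m) u := by simpa [hfar, c1, c2] using hf
        have c1' : G.dist u ((P ^ n) v) < G.dist u ((P ^ n) u) := by
          rcases Nat.lt_or_ge (G.dist u ((P ^ n) v)) (G.dist u ((P ^ n) u)) with h | h
          · exact h
          · exact absurd (Nat.le_antisymm (Nat.le_of_not_lt c1) h).symm (hNe n)
        have c2' : G.dist u ((P ^ m) v) < G.dist u ((P ^ m) u) := by
          rcases Nat.lt_or_ge (G.dist u ((P ^ m) v)) (G.dist u ((P ^ m) u)) with h | h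
          · exact h
          · exact absurd (Nat.le_antisymm (Nat.le_of_not_lt c2) h).symm (hNe m)
        have hadjm : G.Adj ((P ^ m) v) ((P ^ n) u) := hf' ▸ (hAdj m).symm
        have hv' : (P ^ n) v = (P ^ m) v :=
          tree_parent_unique hG u (hAdj n).symm hadjm c1' (hf' ▸ c2')
        exact hkey2 n m hn hm hf' hv'
    -- counting
    set S : Set V := (Set.range fun k : ℤ => (P ^ k) u) ∪ (Set.range fun k : ℤ => (P ^ k) v)
      with hS
    have hfinS : S.Finite := Set.toFinite _
    have hmemS : ∀ n : ℕ, far n ∈ S := by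
      intro n
      by_cases c : G.dist u ((P ^ n) u) < G.dist u ((P ^ n) v)
      · right
        exact ⟨(n : ℤ), by simp [zpow_natCast, hfar, c]⟩
      · left
        exact ⟨(n : ℤ), by simp [zpow_natCast, hfar, c]⟩
    have hcard : L ≤ S.ncard := by
      calc L = (Finset.range L).card := (Finset.card_range L).symm
        _ = ((Finset.range L).image far).card := by
            refine (Finset.card_image_of_injOn ?_).symm
            intro n hn m hm h
            exact hinj n m (Finset.mem_range.mp hn) (Finset.mem_range.mp hm) h
        _ ≤ hfinS.toFinset.card := by
            refine Finset.card_le_card ?_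
            intro x hx
            obtain ⟨n, _, rfl⟩ := Finset.mem_image.mp hx
            exact hfinS.mem_toFinset.mpr (hmemS n)
        _ = S.ncard := (Set.ncard_eq_toFinset_card _ hfinS).symm
    have hsum : S.ncard ≤ a + b := by
      calc S.ncard ≤ (Set.range fun k : ℤ => (P ^ k) u).ncard
            + (Set.range fun k : ℤ => (P ^ k) v).ncard := Set.ncard_union_le _ _
        _ = a + b := by rw [key, key]
    have hfin : Nat.lcm a b ≤ a + b := le_trans hcard hsum
    rw [hpa, hqb]
    exact lcm_le_add_imp_dvd ha0 hb0 hfin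
end

section
/- Let T be a finite tree, P an automorphism of T, and u, v adjacent vertices of T whose orbits O₁ (of cardinality p) and O₂ (of cardinality q) under P are disjoint, with p dividing q. Then for every integer j, the set of neighbours of P^j(u) that belong to O₂ is exactly {P^{j+kp}(v) : 0 ≤ k < q/p}; in particular, every vertex of O₁ has exactly q/p neighbours in O₂. -/
private lemma stmt1_adj_zpow {V : Type*} (G : SimpleGraph V) (P : Equiv.Perm V)
    (hP : ∀ x y : V, G.Adj x y ↔ G.Adj (P x) (P y)) :
    ∀ (k : ℤ) (x y : V), G.Adj x y ↔ G.Adj ((P ^ k) x) ((P ^ k) y) := by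
  have hinv : ∀ x y : V, G.Adj x y ↔ G.Adj (P⁻¹ x) (P⁻¹ y) := by
    intro x y
    simpa using (hP (P⁻¹ x) (P⁻¹ y)).symm
  intro k
  induction k using Int.induction_on with
  | zero => simp
  | succ n ih =>
      intro x y
      have e : ∀ z : V, (P ^ ((n : ℤ) + 1)) z = (P ^ (n : ℤ)) (P z) := fun z => by
        rw [zpow_add_one, Equiv.Perm.mul_apply]
      rw [e, e, ← ih, hP]
  | pred n ih =>
      intro x y
      have e : ∀ z : V, (P ^ (-(n : ℤ) - 1)) z = (P ^ (-(n : ℤ))) (P⁻¹ z) := fun z => by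
        rw [zpow_sub_one, Equiv.Perm.mul_apply]
      rw [e, e, ← ih, hinv]

private lemma stmt1_comp_zpow {V : Type*} (P : Equiv.Perm V) (a b : ℤ) (z : V) :
    (P ^ a) ((P ^ b) z) = (P ^ (a + b)) z := by
  rw [zpow_add, Equiv.Perm.mul_apply]

private lemma stmt1_orbit_eq {V : Type*} (P : Equiv.Perm V) (u : V) :
    (Set.range fun k : ℤ => (P ^ k) u) = MulAction.orbit (Subgroup.zpowers P) u := by
  ext w
  constructor
  · rintro ⟨k, rfl⟩
    exact ⟨⟨P ^ k, Subgroup.zpow_mem _ (Subgroup.mem_zpowers P) k⟩, rfl⟩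
  · rintro ⟨g, rfl⟩
    obtain ⟨k, hk⟩ := Subgroup.mem_zpowers_iff.mp g.2
    exact ⟨k, by simp only []; rw [hk]; rfl⟩

private lemma stmt1_period {V : Type*} [Fintype V] (P : Equiv.Perm V) (u : V) :
    Function.minimalPeriod (fun x : V => P • x) u
      = (Set.range fun k : ℤ => (P ^ k) u).ncard := by
  classical
  haveI : Fintype (MulAction.orbit (Subgroup.zpowers P) u) := Fintype.ofFinite _
  rw [stmt1_orbit_eq, MulAction.minimalPeriod_eq_card, ← Nat.card_coe_set_eq,
    Nat.card_eq_fintype_card]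

/-- Let `T` be a finite tree, `P` an automorphism of `T`, and `u, v` adjacent
vertices of `T` whose orbits `O₁` (of cardinality `p`) and `O₂` (of cardinality `q`) under `P`
are disjoint, with `p` dividing `q`. Then for every integer `j`, the set of neighbours of
`P^j(u)` that belong to `O₂` is exactly `{P^{j+kp}(v) : 0 ≤ k < q/p}`; in particular, every
vertex of `O₁` has exactly `q/p` neighbours in `O₂`. -/
theorem stmt_1 {V : Type*} [Fintype V] (G : SimpleGraph V) (hG : G.IsTree)
    (P : Equiv.Perm V) (hP : ∀ x y : V, G.Adj x y ↔ G.Adj (P x) (P y))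
    (u v : V) (huv : G.Adj u v)
    (O₁ O₂ : Set V)
    (hO₁ : O₁ = Set.range fun k : ℤ => (P ^ k) u)
    (hO₂ : O₂ = Set.range fun k : ℤ => (P ^ k) v)
    (hdisj : Disjoint O₁ O₂)
    (p q : ℕ) (hp : p = O₁.ncard) (hq : q = O₂.ncard) (hpq : p ∣ q) :
    (∀ j : ℤ, {w : V | w ∈ O₂ ∧ G.Adj ((P ^ j) u) w} =
      {w : V | ∃ m : ℕ, m < q / p ∧ w = (P ^ (j + (m : ℤ) * (p : ℤ))) v}) ∧
    ∀ x ∈ O₁, {w : V | w ∈ O₂ ∧ G.Adj x w}.ncard = q / p := by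
  classical
  have hadj := stmt1_adj_zpow G P hP
  have hcomp := stmt1_comp_zpow P
  have hmem1 : ∀ a : ℤ, (P ^ a) u ∈ O₁ := fun a => by rw [hO₁]; exact ⟨a, rfl⟩
  have hmem2 : ∀ a : ℤ, (P ^ a) v ∈ O₂ := fun a => by rw [hO₂]; exact ⟨a, rfl⟩
  -- p and q are the minimal periods of u and v
  have hpu : ∀ k : ℤ, (P ^ k) u = u ↔ (p : ℤ) ∣ k := by
    intro k
    rw [hp, hO₁, ← stmt1_period]
    exact MulAction.zpow_smul_eq_iff_minimalPeriod_dvd (a := P) (b := u)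
  have hqv : ∀ k : ℤ, (P ^ k) v = v ↔ (q : ℤ) ∣ k := by
    intro k
    rw [hq, hO₂, ← stmt1_period]
    exact MulAction.zpow_smul_eq_iff_minimalPeriod_dvd (a := P) (b := v)
  have hvv : ∀ a b : ℤ, (P ^ a) v = (P ^ b) v ↔ (q : ℤ) ∣ (a - b) := by
    intro a b
    constructor
    · intro h
      apply (hqv (a - b)).mp
      have h3 : (P ^ (a - b)) ((P ^ b) v) = (P ^ b) v := by
        rw [hcomp, show a - b + b = a by ring, h]
      have hswap : (P ^ (a - b)) ((P ^ b) v) = (P ^ b) ((P ^ (a - b)) v) := by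
        rw [hcomp, hcomp, show a - b + b = b + (a - b) by ring]
      rw [hswap] at h3
      exact (P ^ b).injective h3
    · intro h
      have h2 : (P ^ (a - b)) v = v := (hqv _).mpr h
      have h3 : (P ^ a) v = (P ^ b) ((P ^ (a - b)) v) := by
        rw [hcomp, show b + (a - b) = a by ring]
      rw [h3, h2]
  -- disjointness of the orbits
  have hne : ∀ a b : ℤ, (P ^ a) u ≠ (P ^ b) v := by
    intro a b h
    exact Set.disjoint_left.mp hdisj (hmem1 a) (by rw [h]; exact hmem2 b)
  -- positivity
  have ppos : 0 < p := by
    rw [hp, Set.ncard_pos (Set.toFinite O₁)]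
    exact ⟨u, by simpa using hmem1 0⟩
  have qpos : 0 < q := by
    rw [hq, Set.ncard_pos (Set.toFinite O₂)]
    exact ⟨v, by simpa using hmem2 0⟩
  set r := q / p with hr
  have hqpr : q = p * r := (Nat.mul_div_cancel' hpq).symm
  have rpos : 0 < r := Nat.div_pos (Nat.le_of_dvd qpos hpq) ppos
  have hqc : (q : ℤ) = (p : ℤ) * (r : ℤ) := by exact_mod_cast hqpr
  -- sym2 equality characterization
  have hsym2 : ∀ a b : ℤ, s((P ^ a) u, (P ^ b) v) = s(u, v) →
      (p : ℤ) ∣ a ∧ (q : ℤ) ∣ b := by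
    intro a b h
    rw [Sym2.eq_iff] at h
    rcases h with ⟨h1, h2⟩ | ⟨h1, h2⟩
    · exact ⟨(hpu a).mp h1, (hqv b).mp h2⟩
    · exact absurd h1 (by simpa using hne a 0)
  -- the key divisibility lemma, via the bridge property of trees
  have hkey : ∀ s : ℤ, G.Adj u ((P ^ s) v) → (p : ℤ) ∣ s := by
    intro s hadjs
    by_contra hs
    have hbridge : G.IsBridge s(u, v) :=
      (SimpleGraph.isAcyclic_iff_forall_adj_isBridge.mp hG.2) huv
    set G' := G \ SimpleGraph.fromEdgeSet {s(u, v)} with hG'def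
    have hnotreach : ¬ G'.Reachable u v := SimpleGraph.isBridge_iff.mp hbridge
    have hG'adj : ∀ x y : V, G.Adj x y → s(x, y) ≠ s(u, v) → G'.Adj x y := by
      intro x y h hne2
      rw [hG'def, SimpleGraph.sdiff_adj, SimpleGraph.fromEdgeSet_adj]
      exact ⟨h, fun hc => hne2 (by simpa using hc.1)⟩
    have main : ∀ n : ℕ, G'.Reachable u ((P ^ (((n : ℤ) + 1) * s)) v) ∨ G'.Reachable u v := by
      intro n
      induction n with
      | zero =>
        left
        have e1 : G'.Adj u ((P ^ s) v) := by
          apply hG'adj _ _ hadjs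
          intro hc
          have hc' : s((P ^ (0 : ℤ)) u, (P ^ s) v) = s(u, v) := by simpa using hc
          exact hs (dvd_trans (Int.natCast_dvd_natCast.mpr hpq) (hsym2 0 s hc').2)
        rw [show (((0 : ℕ) : ℤ) + 1) * s = s by push_cast; ring]
        exact e1.reachable
      | succ n ih =>
        rcases ih with ih | ih
        · set N : ℤ := ((n : ℤ) + 1) * s with hN
          by_cases hqN : (q : ℤ) ∣ N
          · right
            have hvfix : (P ^ N) v = v := (hqv N).mpr hqN
            rwa [hvfix] at ih
          · left
            have e1 : G'.Adj ((P ^ N) v) ((P ^ N) u) := by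
              apply hG'adj _ _ ((hadj N v u).mp huv.symm)
              intro hc
              rw [Sym2.eq_swap] at hc
              exact hqN (hsym2 N N hc).2
            have e2 : G'.Adj ((P ^ N) u) ((P ^ (N + s)) v) := by
              have hGadj : G.Adj ((P ^ N) u) ((P ^ (N + s)) v) := by
                have h5 := (hadj N u ((P ^ s) v)).mp hadjs
                rwa [hcomp] at h5
              apply hG'adj _ _ hGadj
              intro hc
              obtain ⟨h1, h2⟩ := hsym2 N (N + s) hc
              have h3 : (p : ℤ) ∣ N + s := dvd_trans (Int.natCast_dvd_natCast.mpr hpq) h2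
              exact hs (by simpa using dvd_sub h3 h1)
            rw [show (((n + 1 : ℕ) : ℤ) + 1) * s = N + s by rw [hN]; push_cast; ring]
            exact (ih.trans e1.reachable).trans e2.reachable
        · right; exact ih
    rcases main (q - 1) with h | h
    · apply hnotreach
      have hcast : (((q - 1 : ℕ) : ℤ) + 1) * s = (q : ℤ) * s := by
        have h1 : 1 ≤ q := qpos
        push_cast [h1]
        ring
      rw [hcast] at h
      have hvfix : (P ^ ((q : ℤ) * s)) v = v := (hqv _).mpr ⟨s, rfl⟩
      rwa [hvfix] at h
    · exact hnotreach h
  -- part 1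
  have part1 : ∀ j : ℤ, {w : V | w ∈ O₂ ∧ G.Adj ((P ^ j) u) w} =
      {w : V | ∃ m : ℕ, m < r ∧ w = (P ^ (j + (m : ℤ) * (p : ℤ))) v} := by
    intro j
    ext w
    simp only [Set.mem_setOf_eq]
    constructor
    · rintro ⟨hw2, hadjw⟩
      rw [hO₂] at hw2
      obtain ⟨s, rfl⟩ := hw2
      have hA : G.Adj u ((P ^ (-j + s)) v) := by
        have h5 := (hadj (-j) ((P ^ j) u) ((P ^ s) v)).mp hadjw
        rw [hcomp, hcomp, neg_add_cancel] at h5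
        simpa using h5
      obtain ⟨c, hc⟩ := hkey _ hA
      have hrz : (0 : ℤ) < (r : ℤ) := by exact_mod_cast rpos
      have h1 : 0 ≤ c % (r : ℤ) := Int.emod_nonneg c (by omega)
      have h2 : c % (r : ℤ) < (r : ℤ) := Int.emod_lt_of_pos c hrz
      refine ⟨(c % (r : ℤ)).toNat, by omega, ?_⟩
      show (P ^ s) v = (P ^ (j + (((c % (r : ℤ)).toNat : ℤ)) * (p : ℤ))) v
      rw [hvv]
      rw [Int.toNat_of_nonneg h1]
      have heq : s - (j + c % (r : ℤ) * (p : ℤ)) = (p : ℤ) * (c - c % (r : ℤ)) := by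
        linear_combination hc
      rw [heq, hqc]
      apply mul_dvd_mul_left
      refine ⟨c / (r : ℤ), ?_⟩
      have hde := Int.mul_ediv_add_emod c (r : ℤ)
      linarith
    · rintro ⟨m, hm, rfl⟩
      refine ⟨hmem2 _, ?_⟩
      have hmp : (P ^ ((m : ℤ) * (p : ℤ))) u = u := (hpu _).mpr ⟨m, by ring⟩
      have h5 := (hadj (j + (m : ℤ) * (p : ℤ)) u v).mp huv
      have hu' : (P ^ (j + (m : ℤ) * (p : ℤ))) u = (P ^ j) u := by
        rw [← hcomp j ((m : ℤ) * (p : ℤ)) u, hmp]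
      rwa [hu'] at h5
  refine ⟨part1, ?_⟩
  -- part 2
  intro x hx
  rw [hO₁] at hx
  obtain ⟨j, rfl⟩ := hx
  show {w : V | w ∈ O₂ ∧ G.Adj ((P ^ j) u) w}.ncard = r
  rw [part1 j]
  have himg : {w : V | ∃ m : ℕ, m < r ∧ w = (P ^ (j + (m : ℤ) * (p : ℤ))) v} =
      (fun m : ℕ => (P ^ (j + (m : ℤ) * (p : ℤ))) v) '' (Set.Iio r) := by
    ext w
    constructor
    · rintro ⟨m, hm, rfl⟩; exact ⟨m, hm, rfl⟩
    · rintro ⟨m, hm, rfl⟩; exact ⟨m, hm, rfl⟩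
  have hinj : Set.InjOn (fun m : ℕ => (P ^ (j + (m : ℤ) * (p : ℤ))) v) (Set.Iio r) := by
    intro m₁ hm₁ m₂ hm₂ hmeq
    simp only [Set.mem_Iio] at hm₁ hm₂
    simp only [] at hmeq
    rw [hvv, hqc] at hmeq
    obtain ⟨d, hdd⟩ := hmeq
    have hp0 : (p : ℤ) ≠ 0 := by exact_mod_cast ppos.ne'
    have hrd : (r : ℤ) ∣ ((m₁ : ℤ) - (m₂ : ℤ)) := by
      refine ⟨d, ?_⟩
      apply mul_right_cancel₀ hp0
      rw [show ((m₁ : ℤ) - m₂) * (p : ℤ) = j + (m₁ : ℤ) * (p : ℤ) - (j + (m₂ : ℤ) * (p : ℤ))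
        by ring, hdd]
      ring
    have habs : (m₁ : ℤ) - (m₂ : ℤ) = 0 := by
      apply Int.eq_zero_of_abs_lt_dvd hrd
      rw [abs_lt]
      constructor <;> omega
    omega
  rw [himg, Set.ncard_image_of_injOn hinj, ← Finset.coe_range, Set.ncard_coe_finset,
    Finset.card_range]
end

section
/- Let T be a finite tree, P an automorphism of T, and c a coloring of the edges of T invariant under P (i.e. c(P(x)P(y)) = c(xy) for every edge xy). If u, v are adjacent vertices of T whose orbits O₁ and O₂ under P are disjoint, then all edges of T having one endpoint in O₁ and the other endpoint in O₂ have the same color. -/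
/-- Adjacency is preserved by natural powers of an automorphism. -/
lemma stmt2_adj_pow {V : Type*} (G : SimpleGraph V) (P : Equiv.Perm V)
    (hP : ∀ x y : V, G.Adj x y ↔ G.Adj (P x) (P y)) :
    ∀ (n : ℕ) (x y : V), G.Adj x y → G.Adj ((P ^ n) x) ((P ^ n) y) := by
  intro n
  induction n with
  | zero => simp only [pow_zero]; exact fun x y h => h
  | succ n ih =>
    intro x y h
    have : (P ^ (n + 1)) x = (P ^ n) (P x) := by
      rw [pow_succ]; rfl
    rw [this, show (P ^ (n + 1)) y = (P ^ n) (P y) from by rw [pow_succ]; rfl]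
    exact ih _ _ ((hP x y).mp h)

/-- Color invariance is preserved by natural powers of an automorphism. -/
lemma stmt2_c_pow {V C : Type*} (G : SimpleGraph V) (P : Equiv.Perm V)
    (hP : ∀ x y : V, G.Adj x y ↔ G.Adj (P x) (P y))
    (c : Sym2 V → C)
    (hc : ∀ x y : V, G.Adj x y → c s(P x, P y) = c s(x, y)) :
    ∀ (n : ℕ) (x y : V), G.Adj x y → c s((P ^ n) x, (P ^ n) y) = c s(x, y) := by
  intro n
  induction n with
  | zero => simp
  | succ n ih =>
    intro x y h
    have e1 : (P ^ (n + 1)) x = (P ^ n) (P x) := by rw [pow_succ]; rfl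
    have e2 : (P ^ (n + 1)) y = (P ^ n) (P y) := by rw [pow_succ]; rfl
    rw [e1, e2, ih _ _ ((hP x y).mp h), hc x y h]

lemma stmt2_zpow_eq_pow {V : Type*} [Fintype V] (P : Equiv.Perm V) (m : ℤ) :
    ∃ n : ℕ, P ^ m = P ^ n := by
  refine ⟨(m % (orderOf P : ℤ)).toNat, ?_⟩
  rw [← zpow_natCast, Int.toNat_of_nonneg, zpow_mod_orderOf]
  exact Int.emod_nonneg m (by exact_mod_cast (orderOf_pos P).ne')

/-- Key combinatorial lemma: in a tree with automorphism `Q`, if `u ~ v` and `u ~ Q v`,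
the orbits of `u` and `v` under `Q` are disjoint, and `Q` fixes neither `u` nor `v`,
then we get a contradiction. -/
lemma stmt2_key {V : Type*} [Fintype V] (G : SimpleGraph V) (hG : G.IsTree)
    (Q : Equiv.Perm V) (hQ : ∀ x y : V, G.Adj x y ↔ G.Adj (Q x) (Q y))
    (u v : V) (huv : G.Adj u v) (h2 : G.Adj u (Q v))
    (hcross : ∀ a b : ℕ, (Q ^ a) u ≠ (Q ^ b) v)
    (hQu : Q u ≠ u) (hQv : Q v ≠ v) : False := by
  classical
  -- the minimal period of v under Q
  have hex : ∃ k : ℕ, 0 < k ∧ (Q ^ k) v = v := by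
    refine ⟨orderOf Q, orderOf_pos Q, ?_⟩
    rw [pow_orderOf_eq_one]; rfl
  set t := Nat.find hex with ht_def
  obtain ⟨htpos, htfix⟩ := Nat.find_spec hex
  rw [← ht_def] at htpos htfix
  have htmin : ∀ k, k < t → ¬(0 < k ∧ (Q ^ k) v = v) := fun k hk => Nat.find_min hex hk
  have hA : ∀ (k : ℕ) (z : V), (Q ^ (k + 1)) z = (Q ^ k) (Q z) := by
    intro k z; rw [pow_succ, Equiv.Perm.mul_apply]
  have hB : ∀ (k : ℕ) (z : V), (Q ^ (k + 1)) z = Q ((Q ^ k) z) := by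
    intro k z; rw [pow_succ', Equiv.Perm.mul_apply]
  have ht2 : 2 ≤ t := by
    rcases Nat.lt_or_ge t 2 with h | h
    · exfalso
      have h1 : t = 1 := by omega
      rw [h1, pow_one] at htfix
      exact hQv htfix
    · exact h
  -- the deleted-edge graph
  set H := G \ SimpleGraph.fromEdgeSet {s(u, Q v)} with hH
  have hbridge : ¬ H.Reachable u (Q v) := by
    have hbr := (SimpleGraph.isAcyclic_iff_forall_adj_isBridge.mp hG.IsAcyclic) h2
    exact SimpleGraph.isBridge_iff.mp hbr
  have hHadj : ∀ x y : V, G.Adj x y → s(x, y) ≠ s(u, Q v) → H.Adj x y := by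
    intro x y hxy hne
    rw [hH, SimpleGraph.sdiff_adj]
    refine ⟨hxy, ?_⟩
    rw [SimpleGraph.fromEdgeSet_adj]
    rintro ⟨he, -⟩
    exact hne (by simpa using he)
  -- walk from Q^(k+1) v back to Q v inside H
  have claim : ∀ k : ℕ, k < t → H.Reachable ((Q ^ (k + 1)) v) (Q v) := by
    intro k
    induction k with
    | zero => intro _; rw [pow_one]
    | succ k ih =>
      intro hk
      have hk' : k < t := by omega
      have step1 : H.Adj ((Q ^ (k + 2)) v) ((Q ^ (k + 1)) u) := by
        refine (hHadj _ _ ?_ ?_).symm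
        · have := stmt2_adj_pow G Q hQ (k + 1) u (Q v) h2
          have e : (Q ^ (k + 1)) (Q v) = (Q ^ (k + 2)) v := (hA (k + 1) v).symm
          rwa [e] at this
        · intro he
          rw [Sym2.eq_iff] at he
          rcases he with ⟨h1, h22⟩ | ⟨h1, h22⟩
          · -- Q^(k+2) v = Q v  ⇒  Q^(k+1) v = v, contradicting minimality
            have : (Q ^ (k + 1)) v = v := by
              apply Q.injective
              have e : Q ((Q ^ (k + 1)) v) = (Q ^ (k + 2)) v := (hB (k + 1) v).symm
              rw [e, h22]
            exact htmin (k + 1) hk ⟨by omega, this⟩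
          · exact hcross (k + 1) 1 (by rw [pow_one, h1])
      have step2 : H.Adj ((Q ^ (k + 1)) u) ((Q ^ (k + 1)) v) := by
        refine hHadj _ _ (stmt2_adj_pow G Q hQ (k + 1) u v huv) ?_
        intro he
        rw [Sym2.eq_iff] at he
        rcases he with ⟨h1, h22⟩ | ⟨h1, h22⟩
        · -- Q^(k+1) v = Q v ⇒ Q^k v = v
          have hkv : (Q ^ k) v = v := by
            apply Q.injective
            have e : Q ((Q ^ k) v) = (Q ^ (k + 1)) v := (hB k v).symm
            rw [e, h22]
          rcases Nat.eq_zero_or_pos k with h0 | hpos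
          · subst h0
            rw [pow_one] at h1
            exact hQu h1
          · exact htmin k hk' ⟨hpos, hkv⟩
        · exact hcross (k + 1) 1 (by rw [pow_one, h1])
      exact (step1.reachable.trans step2.reachable).trans (ih hk')
  -- now u ~ v = Q^t v ~ ... ~ Q v in H
  have huvH : H.Adj u v := by
    refine hHadj u v huv ?_
    intro he
    rw [Sym2.eq_iff] at he
    rcases he with ⟨-, h22⟩ | ⟨h1, -⟩
    · exact hQv h22.symm
    · exact hcross 0 1 (by simpa [pow_one] using h1)
  have hfin : H.Reachable v (Q v) := by
    have := claim (t - 1) (by omega)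
    rwa [show t - 1 + 1 = t from by omega, htfix] at this
  exact hbridge (huvH.reachable.trans hfin)

/-- Let `T` be a finite tree, `P` an automorphism of `T`, and `c` a coloring of
the edges of `T` invariant under `P`. If `u, v` are adjacent vertices of `T` whose orbits `O₁`
and `O₂` under `P` are disjoint, then all edges of `T` having one endpoint in `O₁` and the other
endpoint in `O₂` have the same color. -/
theorem stmt_2 {V C : Type*} [Fintype V] (G : SimpleGraph V) (hG : G.IsTree)
    (P : Equiv.Perm V) (hP : ∀ x y : V, G.Adj x y ↔ G.Adj (P x) (P y))
    (c : Sym2 V → C)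
    (hc : ∀ x y : V, G.Adj x y → c s(P x, P y) = c s(x, y))
    (u v : V) (huv : G.Adj u v)
    (O₁ O₂ : Set V)
    (hO₁ : O₁ = Set.range fun k : ℤ => (P ^ k) u)
    (hO₂ : O₂ = Set.range fun k : ℤ => (P ^ k) v)
    (hdisj : Disjoint O₁ O₂) :
    ∀ x₁ y₁ x₂ y₂ : V, G.Adj x₁ y₁ → G.Adj x₂ y₂ →
      x₁ ∈ O₁ → y₁ ∈ O₂ → x₂ ∈ O₁ → y₂ ∈ O₂ →
      c s(x₁, y₁) = c s(x₂, y₂) := by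
  classical
  -- zpow versions of invariance
  have hP' : ∀ (m : ℤ) (x y : V), G.Adj x y → G.Adj ((P ^ m) x) ((P ^ m) y) := by
    intro m x y h
    obtain ⟨n, hn⟩ := stmt2_zpow_eq_pow P m
    rw [hn]
    exact stmt2_adj_pow G P hP n x y h
  have hc' : ∀ (m : ℤ) (x y : V), G.Adj x y → c s((P ^ m) x, (P ^ m) y) = c s(x, y) := by
    intro m x y h
    obtain ⟨n, hn⟩ := stmt2_zpow_eq_pow P m
    rw [hn]
    exact stmt2_c_pow G P hP c hc n x y h
  have hmemO₁ : ∀ m : ℤ, (P ^ m) u ∈ O₁ := fun m => by rw [hO₁]; exact ⟨m, rfl⟩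
  have hmemO₂ : ∀ m : ℤ, (P ^ m) v ∈ O₂ := fun m => by rw [hO₂]; exact ⟨m, rfl⟩
  -- the key step: any edge from u to the orbit of v has color c s(u, v)
  have key2 : ∀ m : ℤ, G.Adj u ((P ^ m) v) → c s(u, (P ^ m) v) = c s(u, v) := by
    intro m hm
    by_cases hv : (P ^ m) v = v
    · rw [hv]
    by_cases hu : (P ^ m) u = u
    · calc c s(u, (P ^ m) v) = c s((P ^ m) u, (P ^ m) v) := by rw [hu]
        _ = c s(u, v) := hc' m u v huv
    · exfalso
      refine stmt2_key G hG (P ^ m) ?_ u v huv hm ?_ hu hv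
      · intro x y
        constructor
        · exact hP' m x y
        · intro h
          have := hP' (-m) _ _ h
          have e : ∀ z : V, (P ^ (-m)) ((P ^ m) z) = z := by
            intro z
            rw [← Equiv.Perm.mul_apply, ← zpow_add, neg_add_cancel, zpow_zero]
            rfl
          rwa [e x, e y] at this
      · intro a b hab
        have ea : ((P ^ m) ^ a) u = (P ^ (m * a)) u := by
          rw [← zpow_natCast (P ^ m) a, ← zpow_mul]
        have eb : ((P ^ m) ^ b) v = (P ^ (m * b)) v := by
          rw [← zpow_natCast (P ^ m) b, ← zpow_mul]
        rw [ea, eb] at hab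
        exact Set.disjoint_left.mp hdisj (hmemO₁ (m * a)) (hab ▸ hmemO₂ (m * b))
  -- reduce an arbitrary inter-orbit edge to the key step
  have main : ∀ x y : V, G.Adj x y → x ∈ O₁ → y ∈ O₂ → c s(x, y) = c s(u, v) := by
    intro x y hxy hx hy
    rw [hO₁] at hx; rw [hO₂] at hy
    obtain ⟨a, rfl⟩ := hx
    obtain ⟨b, rfl⟩ := hy
    simp only at hxy ⊢
    have e : ∀ (k : ℤ) (z : V), (P ^ (-a)) ((P ^ k) z) = (P ^ (k - a)) z := by
      intro k z
      rw [← Equiv.Perm.mul_apply, ← zpow_add]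
      ring_nf
    have hadj' : G.Adj u ((P ^ (b - a)) v) := by
      have := hP' (-a) _ _ hxy
      rwa [e a u, e b v, sub_self, zpow_zero, show ((1 : Equiv.Perm V)) u = u from rfl] at this
    calc c s((P ^ a) u, (P ^ b) v)
        = c s((P ^ (-a)) ((P ^ a) u), (P ^ (-a)) ((P ^ b) v)) := (hc' (-a) _ _ hxy).symm
      _ = c s(u, (P ^ (b - a)) v) := by
          rw [e a u, e b v, sub_self, zpow_zero]; rfl
      _ = c s(u, v) := key2 (b - a) hadj'
  intro x₁ y₁ x₂ y₂ h₁ h₂ hx₁ hy₁ hx₂ hy₂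
  rw [main x₁ y₁ h₁ hx₁ hy₁, main x₂ y₂ h₂ hx₂ hy₂]
end

section
/- Let T be a finite tree, P an automorphism of T, and u, v adjacent vertices of T lying in distinct orbits of P, with orbit cardinalities p and q respectively. Then the orbit of the edge uv under the action of P induced on edges has cardinality equal to max(p, q). -/
open Function Set SimpleGraph

/-- Cardinality of the range of a ℤ-indexed function that is "exactly periodic" with period m. -/
lemma card_range_int {α : Type*} {m : ℕ} (hm : 0 < m) (f : ℤ → α)
    (hf : ∀ k j : ℤ, f k = f j ↔ (m : ℤ) ∣ k - j) :
    (Set.range f).ncard = m := by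
  haveI : NeZero m := ⟨hm.ne'⟩
  have hg : Set.range f = Set.range (fun z : ZMod m => f z.val) := by
    ext x
    constructor
    · rintro ⟨k, rfl⟩
      refine ⟨(k : ZMod m), ?_⟩
      rw [hf]
      rw [← ZMod.intCast_zmod_eq_zero_iff_dvd]
      push_cast
      simp [ZMod.natCast_val, ZMod.cast_id]
    · rintro ⟨z, rfl⟩
      exact ⟨(z.val : ℤ), rfl⟩
  rw [hg, ← Set.image_univ, Set.ncard_image_of_injective _ ?_, Set.ncard_univ, Nat.card_zmod]
  intro z1 z2 h
  rw [hf] at h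
  have h1 : z1.val < m := ZMod.val_lt z1
  have h2 : z2.val < m := ZMod.val_lt z2
  have : (z1.val : ℤ) = z2.val := by
    by_contra hne2
    have habs : (0:ℤ) < |(z1.val : ℤ) - z2.val| := by
      rw [abs_pos]; omega
    have hd : (m:ℤ) ∣ |(z1.val : ℤ) - z2.val| := (dvd_abs _ _).mpr h
    have h5 := Int.le_of_dvd habs hd
    have h4 : |(z1.val : ℤ) - z2.val| < m := by rw [abs_lt]; constructor <;> omega
    omega
  have : z1.val = z2.val := by exact_mod_cast this
  exact ZMod.val_injective _ this

/-- Let `T` be a finite tree, `P` an automorphism of `T`, and `u, v` adjacent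
vertices of `T` lying in distinct orbits of `P`, with orbit cardinalities `p` and `q`
respectively. Then the orbit of the edge `uv` under the action of `P` induced on edges has
cardinality equal to `max p q`. -/
theorem stmt_3 {V : Type*} [Fintype V] (G : SimpleGraph V) (hG : G.IsTree)
    (P : Equiv.Perm V) (hP : ∀ x y : V, G.Adj x y ↔ G.Adj (P x) (P y))
    (u v : V) (huv : G.Adj u v)
    (hne : (Set.range fun k : ℤ => (P ^ k) u) ≠ (Set.range fun k : ℤ => (P ^ k) v))
    (p q : ℕ)
    (hp : p = (Set.range fun k : ℤ => (P ^ k) u).ncard)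
    (hq : q = (Set.range fun k : ℤ => (P ^ k) v).ncard) :
    (Set.range fun k : ℤ => s((P ^ k) u, (P ^ k) v)).ncard = max p q := by
  classical
  -- powers of P preserve adjacency
  have hPk : ∀ (k : ℤ) (x y : V), G.Adj ((P ^ k) x) ((P ^ k) y) ↔ G.Adj x y := by
    intro k
    induction k using Int.induction_on with
    | zero => simp
    | succ i ih =>
      intro x y
      rw [zpow_add_one]
      simp only [Equiv.Perm.mul_apply]
      rw [ih (P x) (P y)]
      exact (hP x y).symm
    | pred i ih =>
      intro x y
      rw [zpow_sub_one]
      simp only [Equiv.Perm.mul_apply]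
      rw [ih (P⁻¹ x) (P⁻¹ y), hP (P⁻¹ x) (P⁻¹ y)]
      simp
  -- every point is periodic
  have hper : ∀ x : V, x ∈ Function.periodicPts ⇑P := by
    intro x
    refine ⟨orderOf P, orderOf_pos P, ?_⟩
    show (⇑P)^[orderOf P] x = x
    rw [Equiv.Perm.iterate_eq_pow, pow_orderOf_eq_one]
    rfl
  -- the zpow equality criterion
  have hcrit : ∀ (x : V) (k j : ℤ),
      (P ^ k) x = (P ^ j) x ↔ ((Function.minimalPeriod ⇑P x : ℕ) : ℤ) ∣ k - j := by
    intro x k j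
    have h2 : (P ^ (k - j)) • x = x ↔
        ((Function.minimalPeriod (fun y => P • y) x : ℕ) : ℤ) ∣ (k - j) :=
      MulAction.zpow_smul_eq_iff_minimalPeriod_dvd
    have h2' : (P ^ (k - j)) x = x ↔ ((Function.minimalPeriod ⇑P x : ℕ) : ℤ) ∣ (k - j) := h2
    rw [← h2']
    constructor
    · intro h
      rw [sub_eq_neg_add, zpow_add, Equiv.Perm.mul_apply, h, ← Equiv.Perm.mul_apply,
        ← zpow_add, neg_add_cancel, zpow_zero]
      rfl
    · intro h
      calc (P ^ k) x = (P ^ (j + (k - j))) x := by rw [show j + (k - j) = k by ring]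
        _ = (P ^ j) ((P ^ (k - j)) x) := by rw [zpow_add, Equiv.Perm.mul_apply]
        _ = (P ^ j) x := by rw [h]
  set m := Function.minimalPeriod ⇑P u with hmdef
  set n := Function.minimalPeriod ⇑P v with hndef
  have hm : 0 < m := Function.minimalPeriod_pos_of_mem_periodicPts (hper u)
  have hn : 0 < n := Function.minimalPeriod_pos_of_mem_periodicPts (hper v)
  have hmcard : (Set.range fun k : ℤ => (P ^ k) u).ncard = m :=
    card_range_int hm _ (fun k j => hcrit u k j)
  have hncard : (Set.range fun k : ℤ => (P ^ k) v).ncard = n :=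
    card_range_int hn _ (fun k j => hcrit v k j)
  -- the orbits are disjoint
  have horb : ∀ k j : ℤ, (P ^ k) u ≠ (P ^ j) v := by
    intro k j h
    apply hne
    ext x
    simp only [Set.mem_range]
    constructor
    · rintro ⟨t, rfl⟩
      refine ⟨t - k + j, ?_⟩
      rw [zpow_add, Equiv.Perm.mul_apply, ← h, ← Equiv.Perm.mul_apply, ← zpow_add,
        show t - k + k = t by ring]
    · rintro ⟨t, rfl⟩
      refine ⟨t - j + k, ?_⟩
      rw [zpow_add, Equiv.Perm.mul_apply, h, ← Equiv.Perm.mul_apply, ← zpow_add,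
        show t - j + j = t by ring]
  -- the pair orbit
  set L := Nat.lcm m n with hLdef
  have hL : 0 < L := Nat.pos_of_ne_zero (Nat.lcm_ne_zero hm.ne' hn.ne')
  set F : ℤ → V × V := fun k => ((P ^ k) u, (P ^ k) v) with hFdef
  have hF : ∀ k j : ℤ, F k = F j ↔ ((L : ℕ) : ℤ) ∣ k - j := by
    intro k j
    rw [Prod.ext_iff]
    simp only [hFdef]
    rw [hcrit u k j, hcrit v k j, Int.natCast_dvd, Int.natCast_dvd, Int.natCast_dvd,
      hLdef, Nat.lcm_dvd_iff]
  have hFcard : (Set.range F).ncard = L := card_range_int hL _ hF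
  -- the edge orbit has the same cardinality as the pair orbit
  have hedge : (Set.range fun k : ℤ => s((P ^ k) u, (P ^ k) v)) = Sym2.mk.uncurry '' (Set.range F) := by
    rw [← Set.range_comp]
    rfl
  have hinjmk : Set.InjOn Sym2.mk.uncurry (Set.range F) := by
    rintro x ⟨k, rfl⟩ y ⟨j, rfl⟩ h
    simp only [hFdef, Function.uncurry_apply_pair] at h ⊢
    rw [Sym2.eq_iff] at h
    rcases h with ⟨h1, h2⟩ | ⟨h1, h2⟩
    · rw [Prod.ext_iff]; exact ⟨h1, h2⟩
    · exact absurd h1 (horb k j)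
  have hedgecard : (Set.range fun k : ℤ => s((P ^ k) u, (P ^ k) v)).ncard = L := by
    rw [hedge, Set.ncard_image_of_injOn hinjmk, hFcard]
  -- tree structure: unique paths to the root u
  choose f hfp hfu using fun x => hG.existsUnique_path x u
  have hfu' : ∀ (x : V) (w : G.Walk x u), w.IsPath → w = f x := fun x w hw => hfu x w hw
  -- key step lemma
  have hstep : ∀ (a c : V) (hac : G.Adj c a), (f a).length < (f c).length →
      f c = SimpleGraph.Walk.cons hac (f a) := by
    intro a c hac hlt
    have hcs : c ∉ (f a).support := by
      intro hmem
      have hdrop : ((f a).dropUntil c hmem) = f c := hfu' c _ ((hfp a).dropUntil hmem)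
      have hspec := congrArg SimpleGraph.Walk.length (SimpleGraph.Walk.take_spec (f a) hmem)
      rw [SimpleGraph.Walk.length_append, hdrop] at hspec
      omega
    exact (hfu' c _ ((SimpleGraph.Walk.cons_isPath_iff hac (f a)).mpr ⟨hfp a, hcs⟩)).symm
  -- adjacent vertices have different heights
  have hnelen : ∀ (a c : V), G.Adj c a → (f a).length ≠ (f c).length := by
    intro a c hac heq
    by_cases hmem : c ∈ (f a).support
    · have hdrop : ((f a).dropUntil c hmem) = f c := hfu' c _ ((hfp a).dropUntil hmem)
      have hspec := congrArg SimpleGraph.Walk.length (SimpleGraph.Walk.take_spec (f a) hmem)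
      rw [SimpleGraph.Walk.length_append, hdrop] at hspec
      have h0 : ((f a).takeUntil c hmem).length = 0 := by omega
      exact hac.ne (SimpleGraph.Walk.eq_of_length_eq_zero h0).symm
    · have hcons : SimpleGraph.Walk.cons hac (f a) = f c :=
        hfu' c _ ((SimpleGraph.Walk.cons_isPath_iff hac (f a)).mpr ⟨hfp a, hmem⟩)
      have := congrArg SimpleGraph.Walk.length hcons
      rw [SimpleGraph.Walk.length_cons] at this
      omega
  -- the injection from pairs to vertices
  set ψ : V × V → V := fun x => if (f x.2).length < (f x.1).length then x.1 else x.2 with hψdef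
  have hinjψ : Set.InjOn ψ (Set.range F) := by
    rintro x ⟨k, rfl⟩ y ⟨j, rfl⟩ h
    have hadjk : G.Adj ((P ^ k) u) ((P ^ k) v) := (hPk k u v).mpr huv
    have hadjj : G.Adj ((P ^ j) u) ((P ^ j) v) := (hPk j u v).mpr huv
    simp only [hψdef, hFdef] at h ⊢
    split_ifs at h with h1 h2 h2
    · -- both heavier on the u side
      have e1 : f ((P ^ k) u) = SimpleGraph.Walk.cons hadjk (f ((P ^ k) v)) :=
        hstep _ _ hadjk h1
      have e2 : f ((P ^ j) u) = SimpleGraph.Walk.cons hadjj (f ((P ^ j) v)) :=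
        hstep _ _ hadjj h2
      have hsup := congrArg (fun z => (f z).support) h
      rw [e1, e2, SimpleGraph.Walk.support_cons, SimpleGraph.Walk.support_cons] at hsup
      have hs : (f ((P ^ k) v)).support = (f ((P ^ j) v)).support := by
        exact (List.cons_eq_cons.mp hsup).2
      rw [SimpleGraph.Walk.support_eq_cons (f ((P ^ k) v)),
        SimpleGraph.Walk.support_eq_cons (f ((P ^ j) v))] at hs
      have hv : (P ^ k) v = (P ^ j) v := (List.cons_eq_cons.mp hs).1
      rw [Prod.ext_iff]; exact ⟨h, hv⟩
    · exact absurd h (horb k j)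
    · exact absurd h.symm (horb j k)
    · -- both heavier on the v side
      have hk' : (f ((P ^ k) u)).length < (f ((P ^ k) v)).length := by
        have := hnelen _ _ hadjk
        omega
      have hj' : (f ((P ^ j) u)).length < (f ((P ^ j) v)).length := by
        have := hnelen _ _ hadjj
        omega
      have e1 : f ((P ^ k) v) = SimpleGraph.Walk.cons hadjk.symm (f ((P ^ k) u)) :=
        hstep _ _ hadjk.symm hk'
      have e2 : f ((P ^ j) v) = SimpleGraph.Walk.cons hadjj.symm (f ((P ^ j) u)) :=
        hstep _ _ hadjj.symm hj'
      have hsup := congrArg (fun z => (f z).support) h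
      rw [e1, e2, SimpleGraph.Walk.support_cons, SimpleGraph.Walk.support_cons] at hsup
      have hs : (f ((P ^ k) u)).support = (f ((P ^ j) u)).support :=
        (List.cons_eq_cons.mp hsup).2
      rw [SimpleGraph.Walk.support_eq_cons (f ((P ^ k) u)),
        SimpleGraph.Walk.support_eq_cons (f ((P ^ j) u))] at hs
      have hu' : (P ^ k) u = (P ^ j) u := (List.cons_eq_cons.mp hs).1
      rw [Prod.ext_iff]; exact ⟨hu', h⟩
  -- counting: L ≤ m + n
  have himg : ψ '' (Set.range F) ⊆
      (Set.range fun k : ℤ => (P ^ k) u) ∪ (Set.range fun k : ℤ => (P ^ k) v) := by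
    rintro _ ⟨x, ⟨k, rfl⟩, rfl⟩
    simp only [hψdef, hFdef]
    split_ifs
    · exact Or.inl ⟨k, rfl⟩
    · exact Or.inr ⟨k, rfl⟩
  have hLle : L ≤ m + n := by
    have h1 : (Set.range F).ncard = (ψ '' (Set.range F)).ncard :=
      (Set.ncard_image_of_injOn hinjψ).symm
    have h2 : (ψ '' (Set.range F)).ncard ≤
        ((Set.range fun k : ℤ => (P ^ k) u) ∪ (Set.range fun k : ℤ => (P ^ k) v)).ncard :=
      Set.ncard_le_ncard himg (Set.toFinite _)
    have h3 := Set.ncard_union_le (Set.range fun k : ℤ => (P ^ k) u)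
      (Set.range fun k : ℤ => (P ^ k) v)
    rw [hmcard, hncard] at h3
    omega
  -- arithmetic: L = max m n
  have hLmax : L = max m n := by
    have hdvd : max m n ∣ L := by
      rcases Nat.le_total m n with h | h
      · rw [Nat.max_eq_right h]; exact Nat.dvd_lcm_right m n
      · rw [Nat.max_eq_left h]; exact Nat.dvd_lcm_left m n
    obtain ⟨t, ht⟩ := hdvd
    have hMm : m ≤ max m n := le_max_left m n
    have hMn : n ≤ max m n := le_max_right m n
    match t, ht with
    | 0, ht => omega
    | 1, ht => omega
    | (t + 2), ht =>
      exfalso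
      have h2M : 2 * max m n ≤ L := by
        rw [ht]
        calc 2 * max m n = max m n * 2 := by ring
          _ ≤ max m n * (t + 2) := Nat.mul_le_mul_left _ (by omega)
      have hmn : m = n := by omega
      have : L = m := by rw [hLdef, hmn, Nat.lcm_self]
      omega
  rw [hedgecard, hp, hq, hmcard, hncard, hLmax]
end

section
/- Every automorphism of a finite tree either fixes some vertex, or there exist adjacent vertices u, v such that P(u) = v and P(v) = u (i.e. P maps some edge to itself). -/
open SimpleGraph Walk

/-- Helper: path of a `concat` from non-membership. -/
private lemma concat_isPath' {V : Type*} {G : SimpleGraph V} {u v w : V}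
    {p : G.Walk u v} (hp : p.IsPath) (h : G.Adj v w) (hw : w ∉ p.support) :
    (p.concat h).IsPath := by
  rw [← isPath_reverse_iff, reverse_concat, cons_isPath_iff]
  exact ⟨hp.reverse, by simpa using hw⟩

/-- Helper: if the unique path from `x` to `px` starts with the edge `x–y`, and the unique
path from `y` to `py` starts with the edge `y–x`, and `py` is adjacent to `px`, then
`px = y`. -/
private lemma aux_swap {V : Type*} {G : SimpleGraph V} (hG : G.IsTree)
    {x y px py : V} (hxy : G.Adj x y)
    (q : G.Walk y px) (hq : (Walk.cons hxy q).IsPath)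
    (s : G.Walk x py) (hs : (Walk.cons hxy.symm s).IsPath)
    (hadj : G.Adj py px) : px = y := by
  classical
  by_contra hne
  rw [cons_isPath_iff] at hs
  obtain ⟨hs', hys⟩ := hs
  by_cases hc : px ∈ s.support
  · have ht : (s.takeUntil px hc).IsPath := hs'.takeUntil hc
    have := (hG.existsUnique_path x px).unique hq ht
    have hy : y ∈ (s.takeUntil px hc).support := by
      rw [← this, support_cons]
      exact List.mem_cons_of_mem _ q.start_mem_support
    exact hys (s.support_takeUntil_subset hc hy)
  · have hw : (s.concat hadj).IsPath := concat_isPath' hs' hadj hc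
    have := (hG.existsUnique_path x px).unique hq hw
    have hy : y ∈ (s.concat hadj).support := by
      rw [← this, support_cons]
      exact List.mem_cons_of_mem _ q.start_mem_support
    rw [support_concat, List.mem_append] at hy
    rcases hy with hy | hy
    · exact hys hy
    · have : y = px := by simpa using hy
      exact hne this.symm

/-- Helper: in a finite tree, any function sending every vertex to a neighbor has a
"2-cycle". -/
private lemma aux_cycle {V : Type*} [Fintype V] {G : SimpleGraph V} (hG : G.IsTree)
    (N : V → V) (hadjN : ∀ v, G.Adj v (N v)) : ∃ z, N (N z) = z := by
  classical
  by_contra hno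
  push_neg at hno
  obtain ⟨x0⟩ := hG.isConnected.nonempty
  have key : ∀ n : ℕ, ∃ p : G.Walk (N^[n] x0) x0,
      p.IsPath ∧ p.length = n ∧ p.getVert 1 = N^[n-1] x0 := by
    intro n
    induction n with
    | zero =>
      refine ⟨Walk.nil, by simp, by simp, ?_⟩
      simp [Walk.getVert_of_length_le]
    | succ n ih =>
      obtain ⟨p, hp, hlen, hgv⟩ := ih
      have hbc : G.Adj (N^[n] x0) (N^[n+1] x0) := by
        rw [Function.iterate_succ_apply']
        exact hadjN _
      have hmem : N^[n+1] x0 ∉ p.support := by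
        intro hmem
        have ht : (p.takeUntil _ hmem).IsPath := hp.takeUntil hmem
        have hsingle : (Walk.cons hbc Walk.nil).IsPath := by
          rw [cons_isPath_iff]
          refine ⟨by simp, ?_⟩
          simp only [Walk.support_nil, List.mem_singleton]
          exact hbc.ne
        have heq := (hG.existsUnique_path (N^[n] x0) (N^[n+1] x0)).unique ht hsingle
        have hspec := p.take_spec hmem
        rw [heq] at hspec
        have hgv1 : p.getVert 1 = N^[n+1] x0 := by
          rw [← hspec, Walk.cons_append, Walk.nil_append, Walk.getVert_cons_succ, Walk.getVert_zero]
        rw [hgv] at hgv1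
        match n, hgv1 with
        | 0, hgv1 =>
          simp only [Nat.zero_sub, Function.iterate_zero, id_eq,
            Function.iterate_succ_apply'] at hgv1
          exact (hadjN x0).ne hgv1
        | (m+1), hgv1 =>
          simp only [Nat.add_sub_cancel] at hgv1
          refine hno (N^[m] x0) ?_
          rw [← Function.iterate_succ_apply' N m x0, ← Function.iterate_succ_apply' N (m+1) x0]
          exact hgv1.symm
      refine ⟨Walk.cons hbc.symm p, ?_, by rw [Walk.length_cons, hlen], ?_⟩
      · rw [cons_isPath_iff]; exact ⟨hp, hmem⟩
      · rw [Walk.getVert_cons_succ, Walk.getVert_zero, Nat.add_sub_cancel]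
  obtain ⟨p, hp, hlen, -⟩ := key (Fintype.card V)
  exact absurd hlen (by have := hp.length_lt; omega)

/-- Every automorphism of a finite tree either fixes some vertex, or there
exist adjacent vertices `u, v` such that `P u = v` and `P v = u` (i.e. `P` maps some edge to
itself). -/
theorem stmt_4 {V : Type*} [Fintype V] (G : SimpleGraph V) (hG : G.IsTree)
    (P : Equiv.Perm V) (hP : ∀ x y : V, G.Adj x y ↔ G.Adj (P x) (P y)) :
    (∃ x : V, P x = x) ∨ (∃ u v : V, G.Adj u v ∧ P u = v ∧ P v = u) := by
  classical
  by_contra hcon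
  push_neg at hcon
  obtain ⟨h1, h2⟩ := hcon
  choose pth hpth hup using fun v => hG.existsUnique_path v (P v)
  have hnil : ∀ v, ¬ (pth v).Nil := fun v => Walk.not_nil_of_ne (fun h => h1 v h.symm)
  set N : V → V := fun v => (pth v).getVert 1 with hN
  have hadjN : ∀ v, G.Adj v (N v) := fun v => (pth v).adj_snd (hnil v)
  obtain ⟨z, hz⟩ := aux_cycle hG N hadjN
  set x := z with hx
  set y := N z with hy
  have hxy : G.Adj x y := hadjN z
  have hNy : N y = x := hz
  -- decompose pth x
  have hpx : (Walk.cons ((pth x).adj_snd (hnil x)) (pth x).tail).IsPath := by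
    rw [Walk.cons_tail_eq _ (hnil x)]; exact hpth x
  have hpy : (Walk.cons ((pth y).adj_snd (hnil y)) (pth y).tail).IsPath := by
    rw [Walk.cons_tail_eq _ (hnil y)]; exact hpth y
  rw [cons_isPath_iff] at hpx hpy
  -- q : walk from y to P x
  have hq : (Walk.cons hxy ((pth x).tail)).IsPath := by
    rw [cons_isPath_iff]; exact ⟨hpx.1, hpx.2⟩
  -- s : walk from x to P y, via copy along hNy
  set s : G.Walk x (P y) := ((pth y).tail).copy hNy rfl with hsdef
  have hs : (Walk.cons hxy.symm s).IsPath := by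
    rw [cons_isPath_iff]
    constructor
    · rw [hsdef, Walk.isPath_copy]; exact hpy.1
    · rw [hsdef, Walk.support_copy]; exact hpy.2
  have hPx : P x = y :=
    aux_swap hG hxy ((pth x).tail) hq s hs ((hP y x).mp hxy.symm)
  have hPy : P y = x :=
    aux_swap hG hxy.symm s hs ((pth x).tail) hq ((hP x y).mp hxy)
  exact h2 x y hxy hPx hPy
end

section
/- Let n ≥ 4 and define b₊ : ℝⁿ → ℝⁿ by b₊(x₁, x₂, …, x_{n-1}, x_n) = (2x₁, x₂/2, …, x_{n-1}/2, x_n/2). Let 𝕌 = {x ∈ ℝⁿ : x₁²(x₂² + ⋯ + x_n²) ≤ 1} and ℕᵘ = 𝕌 ∖ {x : x₁ = 0}; the set ℕᵘ is invariant under b₊, and ℤ acts on ℕᵘ by k · x = b₊^k(x). Then the quotient space ℕᵘ/ℤ (with the quotient topology) has exactly two connected components, and each of them is homeomorphic to B^{n-1} × S¹. -/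
open Metric

noncomputable section
namespace Stmt12Aux

variable {m : ℕ}

abbrev E (m : ℕ) := EuclideanSpace ℝ (Fin (m + 1))

/-- the map b₊ -/
def bpF (m : ℕ) : E m → E m := fun x => WithLp.toLp 2 (fun i : Fin (m + 1) => if i = 0 then 2 * x 0 else x i / 2)

/-- squared norm of tail -/
def S (x : E m) : ℝ := ∑ i ∈ Finset.univ.filter (fun i : Fin (m + 1) => i ≠ 0), (x i) ^ 2

def NuS (m : ℕ) : Set (E m) := {x | (x 0) ^ 2 * S x ≤ 1} \ {x | x 0 = 0}

lemma S_eq (x : E m) : S x = ∑ i : Fin m, x i.succ ^ 2 := by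
  have h0 : (Finset.univ.filter (fun i : Fin (m+1) => i ≠ 0)) = Finset.univ.erase 0 := by
    simp [Finset.filter_ne']
  rw [S, h0, Finset.sum_erase_eq_sub (Finset.mem_univ (0 : Fin (m+1))),
    Fin.sum_univ_succ (fun i : Fin (m+1) => x i ^ 2)]
  ring
lemma S_nonneg (x : E m) : 0 ≤ S x := by
  rw [S_eq]; positivity

lemma sq_mul_S (x : E m) : (x 0) ^ 2 * S x = ∑ i : Fin m, (x 0 * x i.succ) ^ 2 := by
  rw [S_eq, Finset.mul_sum]
  simp [mul_pow]

lemma mem_NuS {x : E m} : x ∈ NuS m ↔ (x 0) ^ 2 * S x ≤ 1 ∧ x 0 ≠ 0 := Iff.rfl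

/-- scaling by 2^k -/
def vecScale (k : ℤ) (x : E m) : E m :=
  WithLp.toLp 2 (fun i : Fin (m + 1) => if i = 0 then (2 : ℝ) ^ k * x 0 else x i / (2 : ℝ) ^ k)

lemma vecScale_zero (x : E m) : vecScale 0 x = x := by
  ext i
  by_cases h : i = 0
  · subst h; simp [vecScale]
  · simp [vecScale, h]

lemma vecScale_apply_zero (k : ℤ) (x : E m) : vecScale k x 0 = (2:ℝ)^k * x 0 := by simp [vecScale]

lemma vecScale_apply_succ (k : ℤ) (x : E m) (i : Fin m) :
    vecScale k x i.succ = x i.succ / (2:ℝ)^k := by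
  simp [vecScale, Fin.succ_ne_zero]

lemma bpF_vecScale (k : ℤ) (x : E m) : bpF m (vecScale k x) = vecScale (k+1) x := by
  ext i
  rcases Fin.eq_zero_or_eq_succ i with rfl | ⟨j, rfl⟩
  · simp [bpF, vecScale_apply_zero, zpow_add₀ (two_ne_zero (α := ℝ))]
    ring
  · simp [bpF, Fin.succ_ne_zero, vecScale_apply_succ, zpow_add₀ (two_ne_zero (α := ℝ))]
    ring

lemma sq_mul_S_vecScale (k : ℤ) (x : E m) :
    (vecScale k x 0) ^ 2 * S (vecScale k x) = (x 0) ^ 2 * S x := by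
  rw [sq_mul_S, sq_mul_S]
  refine Finset.sum_congr rfl fun i _ => ?_
  rw [vecScale_apply_zero, vecScale_apply_succ]
  have h2 : ((2:ℝ)^k) ≠ 0 := zpow_ne_zero _ two_ne_zero
  field_simp

lemma vecScale_mem_NuS (k : ℤ) {x : E m} (hx : x ∈ NuS m) : vecScale k x ∈ NuS m := by
  rw [mem_NuS] at hx ⊢
  refine ⟨by rw [sq_mul_S_vecScale]; exact hx.1, ?_⟩
  rw [vecScale_apply_zero]
  exact mul_ne_zero (zpow_ne_zero _ two_ne_zero) hx.2

abbrev Rel (m : ℕ) : ↥(NuS m) → ↥(NuS m) → Prop := fun a b => bpF m ↑a = ↑b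

abbrev Q (m : ℕ) := Quot (Rel m)

lemma bpF_mem_NuS {x : E m} (hx : x ∈ NuS m) : bpF m x ∈ NuS m := by
  have h : bpF m x = vecScale 1 x := by
    calc bpF m x = bpF m (vecScale 0 x) := by rw [vecScale_zero]
    _ = vecScale (0 + 1) x := bpF_vecScale 0 x
    _ = vecScale 1 x := by norm_num
  rw [h]; exact vecScale_mem_NuS 1 hx

lemma mk_vecScale (k : ℤ) {x : E m} (hx : x ∈ NuS m) :
    Quot.mk (Rel m) ⟨vecScale k x, vecScale_mem_NuS k hx⟩ = Quot.mk (Rel m) ⟨x, hx⟩ := by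
  induction k using Int.induction_on with
  | zero => congr 1; exact Subtype.ext (vecScale_zero x)
  | succ n ih =>
      rw [← ih]
      exact (Quot.sound (show Rel m ⟨vecScale n x, vecScale_mem_NuS _ hx⟩
        ⟨vecScale (n+1) x, vecScale_mem_NuS _ hx⟩ from bpF_vecScale n x)).symm
  | pred n ih =>
      rw [← ih]
      exact Quot.sound (show Rel m ⟨vecScale (-n-1) x, vecScale_mem_NuS _ hx⟩
        ⟨vecScale (-n) x, vecScale_mem_NuS _ hx⟩ from by
          show bpF m (vecScale (-(n:ℤ) - 1) x) = vecScale (-(n:ℤ)) x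
          rw [bpF_vecScale]; norm_num)

/-! ### the invariant map -/

open Real

abbrev T (m : ℕ) := ↥(Metric.closedBall (0 : EuclideanSpace ℝ (Fin m)) 1) × Circle

def wMap (x : E m) : EuclideanSpace ℝ (Fin m) := WithLp.toLp 2 (fun i : Fin m => x 0 * x i.succ)

lemma norm_wMap_sq (x : E m) : ‖wMap x‖ ^ 2 = (x 0) ^ 2 * S x := by
  rw [sq_mul_S, EuclideanSpace.norm_eq, Real.sq_sqrt (by positivity)]
  refine Finset.sum_congr rfl fun i _ => ?_
  rw [Real.norm_eq_abs, sq_abs]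
  rfl

lemma wMap_mem {x : E m} (hx : x ∈ NuS m) :
    wMap x ∈ Metric.closedBall (0 : EuclideanSpace ℝ (Fin m)) 1 := by
  rw [Metric.mem_closedBall, dist_zero_right]
  nlinarith [norm_wMap_sq x, mem_NuS.mp hx |>.1, norm_nonneg (wMap x)]

def cMap (x : E m) : Circle := Circle.exp (2 * π * Real.logb 2 |x 0|)

def sgn (x : E m) : Bool := decide (0 < x 0)

def phi (a : ↥(NuS m)) : Bool × T m :=
  (sgn (a : E m), ⟨⟨wMap (a : E m), wMap_mem a.2⟩, cMap (a : E m)⟩)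

lemma wMap_bpF (x : E m) : wMap (bpF m x) = wMap x := by
  ext i
  show bpF m x 0 * bpF m x i.succ = x 0 * x i.succ
  simp [bpF, Fin.succ_ne_zero]
  ring

lemma cMap_bpF {x : E m} (hx : x 0 ≠ 0) : cMap (bpF m x) = cMap x := by
  have h0 : bpF m x 0 = 2 * x 0 := by simp [bpF]
  rw [cMap, cMap, h0, abs_mul, abs_two,
    Real.logb_mul two_ne_zero (abs_ne_zero.mpr hx), Real.logb_self_eq_one (by norm_num)]
  rw [mul_add, mul_one, Circle.exp_add, Circle.exp_two_pi, one_mul]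

lemma sgn_bpF (x : E m) : sgn (bpF m x) = sgn x := by
  have h0 : bpF m x 0 = 2 * x 0 := by simp [bpF]
  simp only [sgn, h0]
  apply decide_eq_decide.mpr
  constructor <;> intro h <;> linarith

lemma phi_rel {a b : ↥(NuS m)} (h : Rel m a b) : phi a = phi b := by
  obtain ⟨a, ha⟩ := a
  obtain ⟨b, hb⟩ := b
  have hb' : b = bpF m a := h.symm
  subst hb'
  simp only [phi, Prod.mk.injEq, Subtype.mk.injEq]
  exact ⟨(sgn_bpF a).symm, (wMap_bpF a).symm, (cMap_bpF (mem_NuS.mp ha).2).symm⟩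

lemma continuous_eval (i : Fin (m+1)) : Continuous fun a : ↥(NuS m) => (a : E m) i :=
  (continuous_apply i).comp
    ((EuclideanSpace.equiv (Fin (m+1)) ℝ).continuous.comp continuous_subtype_val)

lemma continuous_phi : Continuous (phi (m := m)) := by
  have hx0 : Continuous fun a : ↥(NuS m) => (a : E m) 0 := continuous_eval 0
  refine Continuous.prodMk ?_ (Continuous.prodMk ?_ ?_)
  · rw [continuous_discrete_rng]
    intro b
    cases b
    · have : (fun a : ↥(NuS m) => sgn (a : E m)) ⁻¹' {false}
          = (fun a : ↥(NuS m) => (a : E m) 0) ⁻¹' Set.Iio 0 := by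
        ext a
        have ha := (mem_NuS.mp a.2).2
        simp only [Set.mem_preimage, Set.mem_singleton_iff, sgn,
          decide_eq_false_iff_not, not_lt, Set.mem_Iio]
        exact ⟨fun h => lt_of_le_of_ne h ha, fun h => h.le⟩
      rw [this]; exact isOpen_Iio.preimage hx0
    · have : (fun a : ↥(NuS m) => sgn (a : E m)) ⁻¹' {true}
          = (fun a : ↥(NuS m) => (a : E m) 0) ⁻¹' Set.Ioi 0 := by
        ext a
        simp only [Set.mem_preimage, Set.mem_singleton_iff, sgn,
          decide_eq_true_eq, Set.mem_Ioi]
      rw [this]; exact isOpen_Ioi.preimage hx0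
  · apply Continuous.subtype_mk
    have hpi : Continuous fun a : ↥(NuS m) =>
        (fun i : Fin m => (a : E m) 0 * (a : E m) i.succ) :=
      continuous_pi fun i => (continuous_eval 0).mul (continuous_eval i.succ)
    exact ((EuclideanSpace.equiv (Fin m) ℝ).symm.continuous.comp hpi : _)
  · have hlog : Continuous fun a : ↥(NuS m) => Real.log |(a : E m) 0| := by
      rw [continuous_iff_continuousAt]
      intro a
      exact ContinuousAt.comp (f := fun a : ↥(NuS m) => |(a : E m) 0|) (x := a)
        (Real.continuousAt_log (abs_ne_zero.mpr (mem_NuS.mp a.2).2))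
        hx0.continuousAt.abs
    have h2 : Continuous fun a : ↥(NuS m) => 2 * π * Real.logb 2 |(a : E m) 0| := by
      simp only [← Real.log_div_log]
      exact continuous_const.mul (hlog.div_const _)
    exact Circle.exp.continuous.comp h2

lemma phi_inj {a b : ↥(NuS m)} (h : phi a = phi b) :
    Quot.mk (Rel m) a = Quot.mk (Rel m) b := by
  obtain ⟨x, hx⟩ := a
  obtain ⟨y, hy⟩ := b
  have hs : sgn x = sgn y := congrArg Prod.fst h
  have hw : wMap x = wMap y :=
    congrArg (fun p : Bool × T m => (p.2.1 : EuclideanSpace ℝ (Fin m))) h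
  have hc : cMap x = cMap y := congrArg (fun p : Bool × T m => p.2.2) h
  have hx0 := (mem_NuS.mp hx).2
  have hy0 := (mem_NuS.mp hy).2
  obtain ⟨k, hk⟩ := Circle.exp_eq_exp.mp hc
  have hπ : (2 * π) ≠ 0 := by positivity
  have hL : Real.logb 2 |x 0| = Real.logb 2 |y 0| + k :=
    mul_left_cancel₀ hπ (hk.trans (by ring))
  have habs : |x 0| = (2:ℝ) ^ (k : ℤ) * |y 0| := by
    have h1 : |x 0| = (2:ℝ) ^ (Real.logb 2 |x 0|) :=
      (Real.rpow_logb two_pos (by norm_num) (abs_pos.mpr hx0)).symm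
    rw [h1, hL, Real.rpow_add two_pos,
      Real.rpow_logb two_pos (by norm_num) (abs_pos.mpr hy0), Real.rpow_intCast]
    ring
  have hsign : x 0 = (2:ℝ) ^ (k : ℤ) * y 0 := by
    have h2k : (0:ℝ) < (2:ℝ) ^ (k : ℤ) := zpow_pos two_pos _
    by_cases hx' : 0 < x 0
    · have hy' : 0 < y 0 := by
        have : sgn y = true := by rw [← hs]; simp [sgn, hx']
        simpa [sgn] using this
      rw [abs_of_pos hx', abs_of_pos hy'] at habs
      exact habs
    · have hx'' : x 0 < 0 := lt_of_le_of_ne (not_lt.mp hx') hx0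
      have hy' : y 0 < 0 := by
        have h3 : sgn y = false := by rw [← hs]; simp [sgn, hx']
        have : ¬ 0 < y 0 := by simpa [sgn] using h3
        exact lt_of_le_of_ne (not_lt.mp this) hy0
      rw [abs_of_neg hx'', abs_of_neg hy'] at habs
      linarith
  have h2k : ((2:ℝ) ^ (k : ℤ)) ≠ 0 := zpow_ne_zero _ two_ne_zero
  have hxy : x = vecScale k y := by
    ext i
    rcases Fin.eq_zero_or_eq_succ i with rfl | ⟨j, rfl⟩
    · rw [vecScale_apply_zero]; exact hsign
    · rw [vecScale_apply_succ]
      have h5 : x 0 * x j.succ = y 0 * y j.succ := congrArg (fun w => w j) hw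
      have h6 : y 0 * ((2:ℝ) ^ (k : ℤ) * x j.succ) = y 0 * y j.succ := by
        rw [hsign] at h5; linear_combination h5
      have h4 : (2:ℝ) ^ (k : ℤ) * x j.succ = y j.succ := mul_left_cancel₀ hy0 h6
      rw [← h4, mul_div_cancel_left₀ _ h2k]
  have hsub : (⟨x, hx⟩ : ↥(NuS m)) = ⟨vecScale k y, vecScale_mem_NuS k hy⟩ :=
    Subtype.ext hxy
  rw [hsub, mk_vecScale k hy]

lemma sum_sq_le_one {w0 : EuclideanSpace ℝ (Fin m)}
    (hw0 : w0 ∈ Metric.closedBall (0 : EuclideanSpace ℝ (Fin m)) 1) :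
    ∑ i : Fin m, w0 i ^ 2 ≤ 1 := by
  rw [Metric.mem_closedBall, dist_zero_right] at hw0
  have h1 : ‖w0‖ ^ 2 = ∑ i : Fin m, w0 i ^ 2 := by
    rw [EuclideanSpace.norm_eq, Real.sq_sqrt (by positivity)]
    refine Finset.sum_congr rfl fun i _ => ?_
    rw [Real.norm_eq_abs, sq_abs]
  nlinarith [norm_nonneg w0]

lemma phi_surj : Function.Surjective (phi (m := m)) := by
  rintro ⟨b, ⟨w0, hw0⟩, z⟩
  obtain ⟨θ, hθ⟩ : ∃ θ : ℝ, Circle.exp θ = z := ⟨Complex.arg z, Circle.exp_arg z⟩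
  set t : ℝ := θ / (2 * π) with ht
  set u0 : ℝ := (2:ℝ) ^ t with hu0
  have hu0pos : 0 < u0 := Real.rpow_pos_of_pos two_pos t
  set u : ℝ := if b then u0 else -u0 with hu
  have hune : u ≠ 0 := by
    cases b <;> simp [hu] <;> intro h <;> linarith
  have habs : |u| = u0 := by
    cases b
    · simp [hu, abs_of_neg (show -u0 < 0 by linarith)]
    · simp [hu, abs_of_pos hu0pos]
  set x : E m := WithLp.toLp 2 (Fin.cons u (fun i => w0 i / u) : Fin (m+1) → ℝ) with hxdef
  have hx0 : x 0 = u := rfl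
  have hxs : ∀ i : Fin m, x i.succ = w0 i / u := fun i => by
    rw [hxdef]; exact Fin.cons_succ (α := fun _ : Fin (m+1) => ℝ) u (fun i => w0 i / u) i
  have hkey : ∀ i : Fin m, x 0 * x i.succ = w0 i := fun i => by
    rw [hx0, hxs]; field_simp
  have hmem : x ∈ NuS m := by
    rw [mem_NuS]
    refine ⟨?_, by rw [hx0]; exact hune⟩
    rw [sq_mul_S]
    calc ∑ i : Fin m, (x 0 * x i.succ) ^ 2 = ∑ i : Fin m, w0 i ^ 2 := by
          refine Finset.sum_congr rfl fun i _ => by rw [hkey]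
    _ ≤ 1 := sum_sq_le_one hw0
  refine ⟨⟨x, hmem⟩, ?_⟩
  show (sgn x, (⟨⟨wMap x, _⟩, cMap x⟩ : T m)) = (b, ⟨⟨w0, hw0⟩, z⟩)
  have hsgn : sgn x = b := by
    cases b
    · have : x 0 < 0 := by rw [hx0, hu]; simpa using (show -u0 < 0 by linarith)
      simp [sgn, not_lt.mpr this.le, this.not_gt]
    · have : 0 < x 0 := by rw [hx0, hu]; simpa using hu0pos
      simp [sgn, this]
  have hwx : wMap x = w0 := by ext i; exact hkey i
  have hcx : cMap x = z := by
    rw [cMap, hx0, habs, hu0, Real.logb_rpow two_pos (by norm_num)]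
    rw [show 2 * π * t = θ by rw [ht]; field_simp]
    exact hθ
  rw [hsgn, Prod.mk.injEq]
  exact ⟨rfl, by rw [Prod.mk.injEq]; exact ⟨Subtype.ext hwx, hcx⟩⟩

/-! ### compactness of the quotient -/

def KS (m : ℕ) : Set (E m) := {x | (x 0) ^ 2 * S x ≤ 1 ∧ 1 ≤ |x 0| ∧ |x 0| ≤ 2}

lemma KS_subset : KS m ⊆ NuS m := fun x hx =>
  mem_NuS.mpr ⟨hx.1, fun h => by
    have := hx.2.1
    rw [h] at this
    simp at this
    linarith⟩

lemma continuous_eval' (i : Fin (m+1)) : Continuous fun x : E m => x i :=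
  (continuous_apply i).comp (EuclideanSpace.equiv (Fin (m+1)) ℝ).continuous

lemma continuous_S : Continuous fun x : E m => S x := by
  simp only [S]
  exact continuous_finset_sum _ fun i _ => (continuous_eval' i).pow 2

lemma norm_sq_E {k : ℕ} (x : EuclideanSpace ℝ (Fin k)) : ‖x‖ ^ 2 = ∑ i, x i ^ 2 := by
  rw [EuclideanSpace.norm_eq, Real.sq_sqrt (by positivity)]
  exact Finset.sum_congr rfl fun i _ => by rw [Real.norm_eq_abs, sq_abs]

lemma isCompact_KS : IsCompact (KS m) := by
  apply Metric.isCompact_of_isClosed_isBounded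
  · have h1 : KS m = (fun x : E m => (x 0) ^ 2 * S x) ⁻¹' Set.Iic 1 ∩
        ((fun x : E m => |x 0|) ⁻¹' Set.Icc 1 2) := by
      ext x
      simp [KS, Set.mem_Icc, and_assoc]
    rw [h1]
    exact (isClosed_Iic.preimage (((continuous_eval' 0).pow 2).mul continuous_S)).inter
      (isClosed_Icc.preimage (continuous_eval' 0).abs)
  · apply (Metric.isBounded_closedBall (x := (0 : E m)) (r := 3)).subset
    intro x hx
    obtain ⟨h1, h2, h3⟩ := hx
    rw [Metric.mem_closedBall, dist_zero_right]
    have hS : S x ≤ 1 := by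
      have hx2 : 1 ≤ (x 0) ^ 2 := by nlinarith [abs_nonneg (x 0), sq_abs (x 0)]
      nlinarith [S_nonneg x]
    have hx02 : (x 0) ^ 2 ≤ 4 := by nlinarith [sq_abs (x 0), abs_nonneg (x 0)]
    have hn : ‖x‖ ^ 2 ≤ 5 := by
      rw [norm_sq_E, Fin.sum_univ_succ, ← S_eq]
      linarith
    nlinarith [norm_nonneg x]

lemma exists_KS_rep {x : E m} (hx : x ∈ NuS m) :
    ∃ (y : E m) (hy : y ∈ KS m),
      Quot.mk (Rel m) ⟨y, KS_subset hy⟩ = Quot.mk (Rel m) ⟨x, hx⟩ := by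
  have hx0 := (mem_NuS.mp hx).2
  set L : ℝ := Real.logb 2 |x 0| with hL
  set k : ℤ := -⌊L⌋ with hk
  have habs : |vecScale k x 0| = (2:ℝ) ^ (Int.fract L) := by
    rw [vecScale_apply_zero, abs_mul, abs_of_pos (zpow_pos two_pos k),
      show |x 0| = (2:ℝ) ^ L from (Real.rpow_logb two_pos (by norm_num)
        (abs_pos.mpr hx0)).symm, ← Real.rpow_intCast, ← Real.rpow_add two_pos]
    congr 1
    rw [Int.fract]
    push_cast [hk]
    ring
  have hfr0 := Int.fract_nonneg L
  have hfr1 := (Int.fract_lt_one L).le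
  have h1 : 1 ≤ |vecScale k x 0| := by
    rw [habs]
    calc (1:ℝ) = (2:ℝ) ^ (0:ℝ) := (Real.rpow_zero 2).symm
    _ ≤ (2:ℝ) ^ (Int.fract L) := Real.rpow_le_rpow_of_exponent_le one_le_two hfr0
  have h2 : |vecScale k x 0| ≤ 2 := by
    rw [habs]
    calc (2:ℝ) ^ (Int.fract L) ≤ (2:ℝ) ^ (1:ℝ) :=
      Real.rpow_le_rpow_of_exponent_le one_le_two hfr1
    _ = 2 := Real.rpow_one 2
  refine ⟨vecScale k x, ⟨?_, h1, h2⟩, ?_⟩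
  · rw [sq_mul_S_vecScale]; exact (mem_NuS.mp hx).1
  · rw [show (⟨vecScale k x, KS_subset ⟨by rw [sq_mul_S_vecScale]; exact (mem_NuS.mp hx).1, h1, h2⟩⟩
        : ↥(NuS m)) = ⟨vecScale k x, vecScale_mem_NuS k hx⟩ from rfl]
    exact mk_vecScale k hx

lemma compactSpace_Q : CompactSpace (Q m) := by
  constructor
  have hsurj : ∀ q : Q m, ∃ p : ↥(KS m), Quot.mk (Rel m) ⟨↑p, KS_subset p.2⟩ = q := by
    intro q
    induction q using Quot.ind with
    | _ a =>
      obtain ⟨x, hx⟩ := a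
      obtain ⟨y, hy, heq⟩ := exists_KS_rep hx
      exact ⟨⟨y, hy⟩, heq⟩
  have : (Set.univ : Set (Q m)) =
      Set.range (fun p : ↥(KS m) => Quot.mk (Rel m) ⟨↑p, KS_subset p.2⟩) := by
    ext q
    simp only [Set.mem_univ, true_iff, Set.mem_range]
    exact hsurj q
  rw [this]
  haveI : CompactSpace ↥(KS m) := isCompact_iff_compactSpace.mp isCompact_KS
  exact isCompact_range (continuous_quot_mk.comp
    (Continuous.subtype_mk continuous_subtype_val _))

/-! ### the homeomorphism -/

def Phi : Q m → Bool × T m := Quot.lift phi fun _ _ h => phi_rel h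

lemma Phi_bijective : Function.Bijective (Phi (m := m)) := by
  constructor
  · intro q1 q2
    induction q1 using Quot.ind with
    | _ a =>
      induction q2 using Quot.ind with
      | _ b => exact fun h => phi_inj h
  · intro p
    obtain ⟨a, ha⟩ := phi_surj p
    exact ⟨Quot.mk _ a, ha⟩

lemma continuous_Phi : Continuous (Phi (m := m)) :=
  continuous_quot_lift _ continuous_phi

def homeoQ : Q m ≃ₜ Bool × T m := by
  haveI : CompactSpace (Q m) := compactSpace_Q
  exact Continuous.homeoOfEquivCompactToT2
    (f := Equiv.ofBijective (Phi (m := m)) Phi_bijective) continuous_Phi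

/-! ### connected components -/

instance : ConnectedSpace (T m) := by
  haveI h1 : ConnectedSpace ↥(Metric.closedBall (0 : EuclideanSpace ℝ (Fin m)) 1) :=
    Subtype.connectedSpace ⟨⟨0, Metric.mem_closedBall_self (by norm_num)⟩,
      (convex_closedBall _ _).isPreconnected⟩
  haveI hpc : PreconnectedSpace Circle := by
    have hrange : (Set.univ : Set Circle) = Set.range Circle.exp := by
      ext z
      simp only [Set.mem_univ, true_iff, Set.mem_range]
      exact ⟨Complex.arg z, Circle.exp_arg z⟩
    exact ⟨by rw [hrange]; exact isPreconnected_range Circle.exp.continuous⟩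
  haveI h2 : ConnectedSpace Circle := ⟨⟨1⟩⟩
  infer_instance

lemma comp_eq (p : Bool × T m) :
    connectedComponent p = {p.1} ×ˢ (Set.univ : Set (T m)) := by
  apply subset_antisymm
  · exact IsClopen.connectedComponent_subset
      ((isClopen_discrete _).prod isClopen_univ) (by simp)
  · exact IsPreconnected.subset_connectedComponent
      (isPreconnected_singleton.prod isPreconnected_univ) (by simp)

def sliceEquiv (m : ℕ) (b : Bool) : ↥(({b} : Set Bool) ×ˢ (Set.univ : Set (T m))) ≃ T m where
  toFun p := p.1.2
  invFun t := ⟨(b, t), ⟨rfl, trivial⟩⟩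
  left_inv p := by
    obtain ⟨⟨pb, pt⟩, hp⟩ := p
    have hb : pb = b := hp.1
    subst hb
    rfl
  right_inv t := rfl

def sliceHomeo (m : ℕ) (b : Bool) : ↥(({b} : Set Bool) ×ˢ (Set.univ : Set (T m))) ≃ₜ T m where
  toEquiv := sliceEquiv m b
  continuous_toFun := continuous_snd.comp continuous_subtype_val
  continuous_invFun := Continuous.subtype_mk (continuous_const.prodMk continuous_id) _

lemma homeo_image_cc {X Y : Type*} [TopologicalSpace X] [TopologicalSpace Y]
    (h : X ≃ₜ Y) (q : X) : h '' connectedComponent q = connectedComponent (h q) := by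
  apply subset_antisymm (h.continuous.image_connectedComponent_subset q)
  have h2 := h.symm.continuous.image_connectedComponent_subset (h q)
  rw [h.symm_apply_apply] at h2
  calc connectedComponent (h q)
      = h '' (h.symm '' connectedComponent (h q)) := by
        rw [Set.image_image]; simp
  _ ⊆ h '' connectedComponent q := Set.image_mono h2

def t0 (m : ℕ) : T m := (⟨0, Metric.mem_closedBall_self (by norm_num)⟩, 1)

theorem main (m : ℕ) :
    Nonempty (ConnectedComponents (Q m) ≃ Fin 2) ∧
    ∀ q : Q m, Nonempty (↥(connectedComponent q) ≃ₜ
      (↥(Metric.closedBall (0 : EuclideanSpace ℝ (Fin m)) 1) × Circle)) := by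
  set h : Q m ≃ₜ Bool × T m := homeoQ with hh
  constructor
  · refine ⟨Equiv.trans ?_ finTwoEquiv.symm⟩
    refine
      { toFun := (continuous_fst.comp h.continuous).connectedComponentsLift
        invFun := fun b => (↑(h.symm (b, t0 m)) : ConnectedComponents (Q m))
        left_inv := ?_
        right_inv := ?_ }
    · intro c
      obtain ⟨q, rfl⟩ := ConnectedComponents.surjective_coe c
      rw [Continuous.connectedComponentsLift_apply_coe]
      apply ConnectedComponents.coe_eq_coe'.mpr
      have hmem : ((h q).1, t0 m) ∈ connectedComponent (h q) := by
        rw [comp_eq]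
        exact ⟨rfl, trivial⟩
      have himg : h.symm '' connectedComponent (h q) = connectedComponent q := by
        rw [homeo_image_cc h.symm (h q), h.symm_apply_apply]
      rw [← himg]
      exact ⟨_, hmem, rfl⟩
    · intro b
      show (h (h.symm (b, t0 m))).1 = b
      rw [h.apply_symm_apply]
  · intro q
    refine ⟨Homeomorph.trans (h.image (connectedComponent q)) ?_⟩
    refine Homeomorph.trans (Homeomorph.setCongr ?_) (sliceHomeo m (h q).1)
    rw [homeo_image_cc, comp_eq]


end Stmt12Aux
end

/-- Let `n ≥ 4` and define `b₊ : ℝⁿ → ℝⁿ` by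
`b₊(x₁, x₂, …, x_{n-1}, x_n) = (2x₁, x₂/2, …, x_{n-1}/2, x_n/2)`. Let
`𝕌 = {x ∈ ℝⁿ : x₁²(x₂² + ⋯ + x_n²) ≤ 1}` and `ℕᵘ = 𝕌 ∖ {x : x₁ = 0}`; the set `ℕᵘ` is
invariant under `b₊`, and `ℤ` acts on `ℕᵘ` by `k · x = b₊^k(x)`. Then the quotient space
`ℕᵘ/ℤ` has exactly two connected components, and each of them is homeomorphic to
`B^{n-1} × S¹`. -/
theorem stmt_12 (n : ℕ) (hn : 4 ≤ n) [NeZero n]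
    (bp : EuclideanSpace ℝ (Fin n) → EuclideanSpace ℝ (Fin n))
    (hbp : bp = fun x => WithLp.toLp 2 (fun i : Fin n => if i = 0 then 2 * x 0 else x i / 2))
    (U Nu : Set (EuclideanSpace ℝ (Fin n)))
    (hU : U = {x | (x 0) ^ 2 *
      (∑ i ∈ Finset.univ.filter (fun i : Fin n => i ≠ 0), (x i) ^ 2) ≤ 1})
    (hNu : Nu = U \ {x | x 0 = 0}) :
    Nonempty (ConnectedComponents (Quot (fun a b : ↥Nu => bp ↑a = ↑b)) ≃ Fin 2) ∧
    ∀ q : Quot (fun a b : ↥Nu => bp ↑a = ↑b),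
      Nonempty (↥(connectedComponent q) ≃ₜ
        (↥(Metric.closedBall (0 : EuclideanSpace ℝ (Fin (n - 1))) 1) × Circle)) := by
  obtain ⟨m, rfl⟩ : ∃ m, n = m + 1 := ⟨n - 1, (Nat.succ_pred_eq_of_pos (by omega)).symm⟩
  subst hbp hU hNu
  exact Stmt12Aux.main m
end

section
/- Let n ≥ 4 and define b₋ : ℝⁿ → ℝⁿ by b₋(x₁, x₂, …, x_{n-1}, x_n) = (−2x₁, x₂/2, …, x_{n-1}/2, −x_n/2). Let 𝕌 = {x ∈ ℝⁿ : x₁²(x₂² + ⋯ + x_n²) ≤ 1} and ℕᵘ = 𝕌 ∖ {x : x₁ = 0}; the set ℕᵘ is invariant under b₋, and ℤ acts on ℕᵘ by k · x = b₋^k(x). Then the quotient space ℕᵘ/ℤ (with the quotient topology) is homeomorphic to B^{n-1} × S¹. -/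
set_option maxHeartbeats 1000000

open Metric

/-- Let `n ≥ 4` and define `b₋ : ℝⁿ → ℝⁿ` by
`b₋(x₁, x₂, …, x_{n-1}, x_n) = (−2x₁, x₂/2, …, x_{n-1}/2, −x_n/2)`. Let
`𝕌 = {x ∈ ℝⁿ : x₁²(x₂² + ⋯ + x_n²) ≤ 1}` and `ℕᵘ = 𝕌 ∖ {x : x₁ = 0}`; the set `ℕᵘ` is
invariant under `b₋`, and `ℤ` acts on `ℕᵘ` by `k · x = b₋^k(x)`. Then the quotient space
`ℕᵘ/ℤ` is homeomorphic to `B^{n-1} × S¹`. -/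
theorem stmt_13 (n : ℕ) (hn : 4 ≤ n) [NeZero n]
    (bm : EuclideanSpace ℝ (Fin n) → EuclideanSpace ℝ (Fin n))
    (hbm : bm = fun (x : EuclideanSpace ℝ (Fin n)) => WithLp.toLp 2 (fun i : Fin n =>
      if i = 0 then -2 * x 0 else if (i : ℕ) = n - 1 then -(x i) / 2 else x i / 2))
    (U Nu : Set (EuclideanSpace ℝ (Fin n)))
    (hU : U = {x | (x 0) ^ 2 *
      (∑ i ∈ Finset.univ.filter (fun i : Fin n => i ≠ 0), (x i) ^ 2) ≤ 1})
    (hNu : Nu = U \ {x | x 0 = 0}) :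
    Nonempty (Quot (fun a b : ↥Nu => bm ↑a = ↑b) ≃ₜ
      (↥(Metric.closedBall (0 : EuclideanSpace ℝ (Fin (n - 1))) 1) × Circle)) := by
  obtain ⟨m, rfl⟩ : ∃ m, n = m + 1 := ⟨n - 1, by omega⟩
  have hm : 3 ≤ m := by omega
  -- basic coordinate formulas for `bm`
  have hbm0 : ∀ x : EuclideanSpace ℝ (Fin (m + 1)), bm x 0 = -2 * x 0 := by
    intro x; rw [hbm]; simp
  have hbms : ∀ (x : EuclideanSpace ℝ (Fin (m + 1))) (i : Fin m),
      bm x i.succ = if (i : ℕ) + 1 = m then -(x i.succ) / 2 else x i.succ / 2 := by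
    intro x i; rw [hbm]
    simp [Fin.succ_ne_zero, Fin.val_succ]
  -- rewriting the sum over nonzero indices
  have hsum : ∀ f : Fin (m + 1) → ℝ,
      (∑ i ∈ Finset.univ.filter (fun i : Fin (m + 1) => i ≠ 0), f i)
        = ∑ i : Fin m, f i.succ := by
    intro f
    rw [Finset.sum_filter, Fin.sum_univ_succ]
    simp [Fin.succ_ne_zero]
  -- membership in Nu
  have hmem : ∀ x : EuclideanSpace ℝ (Fin (m + 1)),
      x ∈ Nu ↔ ((x 0) ^ 2 * (∑ i : Fin m, (x i.succ) ^ 2) ≤ 1 ∧ x 0 ≠ 0) := by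
    intro x
    rw [hNu, hU, Set.mem_diff]
    simp [hsum (fun i => (x i) ^ 2)]
  -- zpow helpers
  have hne2 : (-2 : ℝ) ≠ 0 := by norm_num
  have hsq : ∀ k : ℤ, ((-2:ℝ) ^ k) ^ 2 = 4 ^ k := by
    intro k; rw [sq, ← mul_zpow]; norm_num
  have hsq' : ∀ k : ℤ, ((2:ℝ) ^ k) ^ 2 = 4 ^ k := by
    intro k; rw [sq, ← mul_zpow]; norm_num
  -- the ℤ-action on the ambient space
  obtain ⟨P, hP0, hPs⟩ : ∃ P : ℤ → EuclideanSpace ℝ (Fin (m+1)) → EuclideanSpace ℝ (Fin (m+1)),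
      (∀ k x, P k x 0 = (-2:ℝ) ^ k * x 0) ∧
      (∀ k x (i : Fin m), P k x i.succ =
        if (i : ℕ) + 1 = m then (-2:ℝ) ^ (-k) * x i.succ else (2:ℝ) ^ (-k) * x i.succ) := by
    refine ⟨fun k x => WithLp.toLp 2 (fun j : Fin (m+1) => if j = 0 then (-2:ℝ) ^ k * x 0
      else if (j : ℕ) = m then (-2:ℝ) ^ (-k) * x j else (2:ℝ) ^ (-k) * x j), ?_, ?_⟩
    · intro k x; simp
    · intro k x i; simp [Fin.succ_ne_zero, Fin.val_succ]
  have hPmem : ∀ (k : ℤ) x, x ∈ Nu → P k x ∈ Nu := by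
    intro k x hx
    rw [hmem] at hx ⊢
    obtain ⟨hx1, hx2⟩ := hx
    constructor
    · have hterm : ∀ i : Fin m, (P k x i.succ) ^ 2 = (4:ℝ) ^ (-k) * (x i.succ) ^ 2 := by
        intro i
        rw [hPs]
        split_ifs <;> rw [mul_pow]
        · rw [hsq]
        · rw [hsq']
      rw [hP0]
      calc ((-2:ℝ) ^ k * x 0) ^ 2 * (∑ i : Fin m, (P k x i.succ) ^ 2)
          = (4:ℝ) ^ k * (4:ℝ) ^ (-k) * ((x 0) ^ 2 * ∑ i : Fin m, (x i.succ) ^ 2) := by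
            rw [Finset.sum_congr rfl (fun i _ => hterm i), ← Finset.mul_sum, mul_pow, hsq]
            ring
        _ = (x 0) ^ 2 * ∑ i : Fin m, (x i.succ) ^ 2 := by
            rw [← zpow_add₀ (by norm_num : (4:ℝ) ≠ 0)]
            simp
        _ ≤ 1 := hx1
    · rw [hP0]
      exact mul_ne_zero (zpow_ne_zero k hne2) hx2
  have hPrel : ∀ (k : ℤ) x, bm (P k x) = P (k + 1) x := by
    intro k x
    refine PiLp.ext fun j => ?_
    induction j using Fin.cases with
    | zero =>
        rw [hbm0, hP0, hP0, zpow_add_one₀ hne2]; ring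
    | succ i =>
        rw [hbms, hPs, hPs]
        have h1 : (-2:ℝ) ^ (-(k+1)) = ((-2:ℝ) ^ (-k)) * (-2:ℝ)⁻¹ := by
          rw [← zpow_neg_one, ← zpow_add₀ hne2]; ring_nf
        have h2 : (2:ℝ) ^ (-(k+1)) = ((2:ℝ) ^ (-k)) * (2:ℝ)⁻¹ := by
          rw [← zpow_neg_one, ← zpow_add₀ (by norm_num : (2:ℝ) ≠ 0)]; ring_nf
        split_ifs
        · rw [h1]; ring
        · rw [h2]; ring
  have hP0x : ∀ x, P 0 x = x := by
    intro x
    refine PiLp.ext fun j => ?_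
    induction j using Fin.cases with
    | zero => rw [hP0]; norm_num
    | succ i => rw [hPs]; split_ifs <;> norm_num
  have hQ : ∀ (a : ↥Nu) (k : ℤ),
      Quot.mk (fun a b : ↥Nu => bm ↑a = ↑b) a
        = Quot.mk _ (⟨P k a.1, hPmem k a.1 a.2⟩ : ↥Nu) := by
    intro a k
    induction k using Int.induction_on with
    | zero =>
        congr 1
        exact Subtype.ext (hP0x a.1).symm
    | succ k ih =>
        rw [ih]
        exact Quot.sound (hPrel k a.1)
    | pred k ih =>
        rw [ih]
        refine (Quot.sound ?_).symm
        show bm (P (-k - 1) a.1) = _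
        rw [hPrel (-k - 1) a.1]
        norm_num
  -- norms
  have hnorm' : ∀ w : EuclideanSpace ℝ (Fin m), ‖w‖ ^ 2 = ∑ i, (w i) ^ 2 := by
    intro w
    rw [EuclideanSpace.norm_eq, Real.sq_sqrt (by positivity)]
    simp [sq_abs]
  have hnormE : ∀ x : EuclideanSpace ℝ (Fin (m + 1)),
      ‖x‖ ^ 2 = (x 0) ^ 2 + ∑ i : Fin m, (x i.succ) ^ 2 := by
    intro x
    rw [EuclideanSpace.norm_eq, Real.sq_sqrt (by positivity), Fin.sum_univ_succ]
    simp [sq_abs]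
  -- the ball coordinate
  obtain ⟨z, hz⟩ : ∃ z : ↥Nu → EuclideanSpace ℝ (Fin m), ∀ (x : ↥Nu) (i : Fin m),
      z x i = (if (i : ℕ) + 1 = m then x.1 0 else |x.1 0|) * x.1 i.succ :=
    ⟨fun x => WithLp.toLp 2 (fun i : Fin m => (if (i : ℕ) + 1 = m then x.1 0 else |x.1 0|) * x.1 i.succ),
      fun _ _ => rfl⟩
  have hzsq : ∀ (x : ↥Nu) (i : Fin m), (z x i) ^ 2 = (x.1 0) ^ 2 * (x.1 i.succ) ^ 2 := by
    intro x i
    rw [hz, mul_pow]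
    split_ifs <;> simp [sq_abs]
  have hznorm : ∀ x : ↥Nu, ‖z x‖ ^ 2 = (x.1 0) ^ 2 * ∑ i : Fin m, (x.1 i.succ) ^ 2 := by
    intro x
    rw [hnorm', Finset.sum_congr rfl (fun i _ => hzsq x i), ← Finset.mul_sum]
  have hzball : ∀ x : ↥Nu, z x ∈ closedBall (0 : EuclideanSpace ℝ (Fin m)) 1 := by
    intro x
    rw [mem_closedBall_zero_iff]
    have h1 : ‖z x‖ ^ 2 ≤ 1 := by rw [hznorm]; exact ((hmem x.1).1 x.2).1
    nlinarith [norm_nonneg (z x)]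
  -- the circle coordinate
  obtain ⟨c, hc⟩ : ∃ c : ↥Nu → Circle, ∀ x : ↥Nu,
      c x = Circle.exp (Real.pi * (Real.logb 2 (x.1 0) + if x.1 0 < 0 then 1 else 0)) :=
    ⟨_, fun _ => rfl⟩
  -- invariance
  have hzinv : ∀ a b : ↥Nu, bm ↑a = ↑b → z a = z b := by
    intro a b hab
    have h0 : b.1 0 = -2 * a.1 0 := by rw [← hab]; exact hbm0 a.1
    have hs : ∀ i : Fin m, b.1 i.succ
        = if (i : ℕ) + 1 = m then -(a.1 i.succ) / 2 else a.1 i.succ / 2 := by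
      intro i; rw [← hab]; exact hbms a.1 i
    refine PiLp.ext fun i => ?_
    rw [hz, hz, h0, hs]
    split_ifs with h
    · ring
    · have habs : |(-2 : ℝ) * a.1 0| = 2 * |a.1 0| := by rw [abs_mul]; norm_num
      rw [habs]; ring
  have hcinv : ∀ a b : ↥Nu, bm ↑a = ↑b → c a = c b := by
    intro a b hab
    have hA : a.1 0 ≠ 0 := ((hmem a.1).1 a.2).2
    have h0 : b.1 0 = -2 * a.1 0 := by rw [← hab]; exact hbm0 a.1
    have hlog : Real.logb 2 (b.1 0) = 1 + Real.logb 2 (a.1 0) := by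
      rw [h0, Real.logb_mul (by norm_num) hA]
      have h2 : Real.logb 2 (-2 : ℝ) = 1 := by
        rw [Real.logb, Real.log_neg_eq_log, div_self (ne_of_gt (Real.log_pos one_lt_two))]
      rw [h2]
    rw [hc, hc, hlog]
    rcases hA.lt_or_gt with h | h
    · have hb0 : ¬ (b.1 0 < 0) := by rw [h0]; nlinarith
      rw [if_pos h, if_neg hb0]
      congr 1
      ring
    · have hb0 : b.1 0 < 0 := by rw [h0]; nlinarith
      rw [if_neg (not_lt.2 h.le), if_pos hb0]
      refine Circle.exp_eq_exp.mpr ⟨-1, ?_⟩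
      push_cast
      ring
  -- continuity
  have hev : ∀ j : Fin (m + 1), Continuous (fun x : ↥Nu => x.1 j) := by
    intro j
    exact (continuous_apply j).comp
      ((PiLp.continuousLinearEquiv 2 ℝ (fun _ : Fin (m + 1) => ℝ)).continuous.comp
        continuous_subtype_val)
  have hcz : Continuous z := by
    have hzeq : z = fun x => (PiLp.continuousLinearEquiv 2 ℝ (fun _ : Fin m => ℝ)).symm
        (fun i => (if (i : ℕ) + 1 = m then x.1 0 else |x.1 0|) * x.1 i.succ) := by
      funext x
      exact PiLp.ext (fun i => hz x i)
    rw [hzeq]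
    exact (PiLp.continuousLinearEquiv 2 ℝ _).symm.continuous.comp
      (continuous_pi fun i => by
        refine Continuous.mul ?_ (hev i.succ)
        split_ifs
        · exact hev 0
        · exact continuous_abs.comp (hev 0))
  have hx0ne : ∀ x : ↥Nu, x.1 0 ≠ 0 := fun x => ((hmem x.1).1 x.2).2
  have hcc : Continuous c := by
    have hceq : c = fun x => Circle.exp
        (Real.pi * (Real.logb 2 (x.1 0) + if x.1 0 < 0 then 1 else 0)) := funext hc
    rw [hceq]
    refine Circle.exp.continuous.comp (continuous_const.mul (Continuous.add ?_ ?_))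
    · rw [continuous_iff_continuousAt]
      intro x
      have h1 : ContinuousAt (Real.logb 2) ((fun y : ↥Nu => y.1 0) x) :=
        Real.continuousAt_logb (hx0ne x)
      exact ContinuousAt.comp (x := x) h1 ((hev 0).continuousAt)
    · rw [continuous_iff_continuousAt]
      intro x
      rcases (hx0ne x).lt_or_gt with h | h
      · refine ContinuousAt.congr (continuousAt_const (y := (1:ℝ))) ?_
        exact Filter.eventually_of_mem ((isOpen_Iio.preimage (hev 0)).mem_nhds h)
          fun y (hy : y.1 0 < 0) => (if_pos hy).symm
      · refine ContinuousAt.congr (continuousAt_const (y := (0:ℝ))) ?_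
        exact Filter.eventually_of_mem ((isOpen_Ioi.preimage (hev 0)).mem_nhds h)
          fun y (hy : 0 < y.1 0) => (if_neg (not_lt.2 hy.le)).symm
  -- powers of -2 with known parity
  have hevenpow : ∀ l : ℤ, (-2:ℝ) ^ (2 * l) = (2:ℝ) ^ (2 * l) := by
    intro l; rw [zpow_mul, zpow_mul]; norm_num
  have hoddpow : ∀ l : ℤ, (-2:ℝ) ^ (2 * l + 1) = -((2:ℝ) ^ (2 * l + 1)) := by
    intro l
    rw [zpow_add_one₀ hne2, zpow_add_one₀ (two_ne_zero), hevenpow]; ring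
  have habs0 : ∀ x : ↥Nu, (2:ℝ) ^ (Real.logb 2 (x.1 0)) = |x.1 0| :=
    fun x => Real.rpow_logb_eq_abs two_pos (by norm_num) (hx0ne x)
  -- injectivity core: equal invariants force lying in the same orbit
  have hkey : ∀ a b : ↥Nu, z a = z b → c a = c b →
      ∃ k : ℤ, (b : EuclideanSpace ℝ (Fin (m + 1))) = P k a.1 := by
    intro a b hzab hcab
    have hA := hx0ne a
    have hB := hx0ne b
    rw [hc, hc] at hcab
    obtain ⟨mm, hmm⟩ := Circle.exp_eq_exp.mp hcab
    have hlin : Real.logb 2 (a.1 0) + (if a.1 0 < 0 then (1:ℝ) else 0)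
        = Real.logb 2 (b.1 0) + (if b.1 0 < 0 then (1:ℝ) else 0) + 2 * mm := by
      apply mul_left_cancel₀ Real.pi_ne_zero
      rw [hmm]; ring
    obtain ⟨k, hkform⟩ : ∃ k : ℤ, k = (if a.1 0 < 0 then (1:ℤ) else 0)
        - (if b.1 0 < 0 then (1:ℤ) else 0) - 2 * mm := ⟨_, rfl⟩
    have hkr : (k : ℝ) = (if a.1 0 < 0 then (1:ℝ) else 0)
        - (if b.1 0 < 0 then (1:ℝ) else 0) - 2 * mm := by
      rw [hkform]; split_ifs <;> push_cast <;> ring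
    have hlogb : Real.logb 2 (b.1 0) = Real.logb 2 (a.1 0) + (k : ℝ) := by
      rw [hkr]; linarith [hlin]
    have habsB : |b.1 0| = |a.1 0| * (2:ℝ) ^ k := by
      rw [← habs0 b, ← habs0 a, hlogb, Real.rpow_add two_pos, Real.rpow_intCast]
    have hb0P : b.1 0 = (-2:ℝ) ^ k * a.1 0 := by
      rcases hA.lt_or_gt with ha | ha <;> rcases hB.lt_or_gt with hb' | hb'
      · have hk2 : k = 2 * (-mm) := by rw [hkform, if_pos ha, if_pos hb']; ring
        rw [abs_of_neg hb', abs_of_neg ha, hk2] at habsB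
        rw [hk2, hevenpow]; linarith
      · have hk2 : k = 2 * (-mm) + 1 := by rw [hkform, if_pos ha, if_neg (not_lt.2 hb'.le)]; ring
        rw [abs_of_pos hb', abs_of_neg ha, hk2] at habsB
        rw [hk2, hoddpow]; linarith
      · have hk2 : k = 2 * (-mm - 1) + 1 := by
          rw [hkform, if_neg (not_lt.2 ha.le), if_pos hb']; ring
        rw [abs_of_neg hb', abs_of_pos ha, hk2] at habsB
        rw [hk2, hoddpow]; linarith
      · have hk2 : k = 2 * (-mm) := by
          rw [hkform, if_neg (not_lt.2 ha.le), if_neg (not_lt.2 hb'.le)]; ring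
        rw [abs_of_pos hb', abs_of_pos ha, hk2] at habsB
        rw [hk2, hevenpow]; linarith
    refine ⟨k, PiLp.ext fun j => ?_⟩
    induction j using Fin.cases with
    | zero => rw [hP0]; exact hb0P
    | succ i =>
        have hzi : z a i = z b i := congrFun (congrArg WithLp.ofLp hzab) i
        rw [hz, hz] at hzi
        rw [hPs]
        split_ifs at hzi ⊢ with hcase
        · have hne : (-2:ℝ) ^ k ≠ 0 := zpow_ne_zero k hne2
          have h5 : (-2:ℝ) ^ k * b.1 i.succ = a.1 i.succ := by
            apply mul_left_cancel₀ hA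
            rw [← mul_assoc, mul_comm (a.1 0) ((-2:ℝ) ^ k), ← hb0P]
            exact hzi.symm
          rw [zpow_neg, ← h5, inv_mul_cancel_left₀ hne]
        · have hne : (2:ℝ) ^ k ≠ 0 := zpow_ne_zero k two_ne_zero
          have hA' : |a.1 0| ≠ 0 := abs_ne_zero.mpr hA
          have h5 : (2:ℝ) ^ k * b.1 i.succ = a.1 i.succ := by
            apply mul_left_cancel₀ hA'
            rw [← mul_assoc, ← habsB]
            exact hzi.symm
          rw [zpow_neg, ← h5, inv_mul_cancel_left₀ hne]
  -- surjectivity core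
  have hsurjcore : ∀ w : EuclideanSpace ℝ (Fin m),
      w ∈ closedBall (0 : EuclideanSpace ℝ (Fin m)) 1 → ∀ cc : Circle,
      ∃ (x : EuclideanSpace ℝ (Fin (m + 1))) (hx : x ∈ Nu),
        z ⟨x, hx⟩ = w ∧ c ⟨x, hx⟩ = cc := by
    intro w hw cc
    obtain ⟨θ, hθ⟩ : ∃ θ : ℝ, Real.pi * θ = Complex.arg (cc : ℂ) :=
      ⟨Complex.arg (cc : ℂ) / Real.pi, by field_simp⟩
    have hApos : (0:ℝ) < (2:ℝ) ^ θ := Real.rpow_pos_of_pos two_pos θ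
    obtain ⟨x, hx0, hxs⟩ : ∃ x : EuclideanSpace ℝ (Fin (m + 1)),
        x 0 = (2:ℝ) ^ θ ∧ ∀ i : Fin m, x i.succ = w i / (2:ℝ) ^ θ := by
      refine ⟨WithLp.toLp 2 (fun j => if h : j = 0 then (2:ℝ) ^ θ else w (j.pred h) / (2:ℝ) ^ θ), by simp, ?_⟩
      intro i
      simp only [PiLp.toLp_apply, dif_neg (Fin.succ_ne_zero i)]
      rw [Fin.pred_succ]
    have hxmem : x ∈ Nu := by
      rw [hmem]
      refine ⟨?_, by rw [hx0]; exact ne_of_gt hApos⟩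
      have hts : ∀ i : Fin m, (x i.succ) ^ 2 = (w i) ^ 2 / ((2:ℝ) ^ θ) ^ 2 := by
        intro i; rw [hxs i, div_pow]
      have hA2 : ((2:ℝ) ^ θ) ^ 2 ≠ 0 := by positivity
      rw [hx0, Finset.sum_congr rfl (fun i _ => hts i), ← Finset.sum_div, mul_comm,
        div_mul_cancel₀ _ hA2, ← hnorm' w]
      have hw1 : ‖w‖ ≤ 1 := mem_closedBall_zero_iff.mp hw
      nlinarith [norm_nonneg w]
    refine ⟨x, hxmem, ?_, ?_⟩
    · refine PiLp.ext fun i => ?_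
      rw [hz]
      show (if (i : ℕ) + 1 = m then x 0 else |x 0|) * x i.succ = w i
      rw [hxs i]
      split_ifs
      · rw [hx0]; field_simp
      · rw [hx0, abs_of_pos hApos]; field_simp
    · rw [hc]
      show Circle.exp (Real.pi * (Real.logb 2 (x 0) + if x 0 < 0 then 1 else 0)) = cc
      rw [hx0, Real.logb_rpow two_pos (by norm_num), if_neg (not_lt.2 hApos.le), add_zero, hθ]
      exact Circle.exp_arg cc
  -- a compact fundamental domain
  obtain ⟨C, hCdef⟩ : ∃ C : Set (EuclideanSpace ℝ (Fin (m + 1))),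
      C = {x | (x 0) ^ 2 * (∑ i : Fin m, (x i.succ) ^ 2) ≤ 1}
        ∩ ({x | 1 ≤ |x 0|} ∩ {x | |x 0| ≤ 2}) := ⟨_, rfl⟩
  have hevE : ∀ j : Fin (m + 1),
      Continuous fun x : EuclideanSpace ℝ (Fin (m + 1)) => x j := by
    intro j
    exact (continuous_apply j).comp (PiLp.continuousLinearEquiv 2 ℝ _).continuous
  have hCsub : C ⊆ Nu := by
    intro x hx
    rw [hCdef] at hx
    rw [hmem]
    refine ⟨hx.1, ?_⟩
    have h1 : 1 ≤ |x 0| := hx.2.1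
    intro h0
    rw [h0] at h1
    norm_num at h1
  have hCcl : IsClosed C := by
    rw [hCdef]
    refine IsClosed.inter ?_ (IsClosed.inter ?_ ?_)
    · exact isClosed_le (Continuous.mul ((hevE 0).pow 2)
        (continuous_finset_sum _ fun i _ => (hevE i.succ).pow 2)) continuous_const
    · exact isClosed_le continuous_const (continuous_abs.comp (hevE 0))
    · exact isClosed_le (continuous_abs.comp (hevE 0)) continuous_const
  have hCbd : Bornology.IsBounded C := by
    apply Bornology.IsBounded.subset
      (Metric.isBounded_closedBall (x := (0 : EuclideanSpace ℝ (Fin (m + 1)))) (r := 3))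
    intro x hx
    rw [hCdef] at hx
    rw [mem_closedBall_zero_iff]
    obtain ⟨h1, h2, h3⟩ := hx
    have h1' : (x 0) ^ 2 * (∑ i : Fin m, (x i.succ) ^ 2) ≤ 1 := h1
    have h2' : (1:ℝ) ≤ |x 0| := h2
    have h3' : |x 0| ≤ 2 := h3
    have hsq0 : (1:ℝ) ≤ (x 0) ^ 2 := by nlinarith [sq_abs (x 0), abs_nonneg (x 0)]
    have hsum0 : (0:ℝ) ≤ ∑ i : Fin m, (x i.succ) ^ 2 := by positivity
    have hS1 : ∑ i : Fin m, (x i.succ) ^ 2 ≤ 1 := by nlinarith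
    have hx02 : (x 0) ^ 2 ≤ 4 := by nlinarith [sq_abs (x 0), abs_nonneg (x 0)]
    have h9 : ‖x‖ ^ 2 ≤ 9 := by rw [hnormE x]; linarith
    nlinarith [norm_nonneg x, h9]
  have hCcomp : IsCompact C := Metric.isCompact_of_isClosed_isBounded hCcl hCbd
  haveI : CompactSpace (Quot (fun a b : ↥Nu => bm ↑a = ↑b)) := by
    constructor
    haveI : CompactSpace ↥C := isCompact_iff_compactSpace.mp hCcomp
    have hφ : Continuous (fun x : ↥C => Quot.mk (fun a b : ↥Nu => bm ↑a = ↑b)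
        (⟨x.1, hCsub x.2⟩ : ↥Nu)) :=
      continuous_quot_mk.comp (Continuous.subtype_mk continuous_subtype_val _)
    have hrange : Set.range (fun x : ↥C => Quot.mk (fun a b : ↥Nu => bm ↑a = ↑b)
        (⟨x.1, hCsub x.2⟩ : ↥Nu)) = Set.univ := by
      rw [Set.eq_univ_iff_forall]
      intro q
      induction q using Quot.ind with
      | _ a =>
        have habs : (0:ℝ) < |a.1 0| := abs_pos.mpr (hx0ne a)
        obtain ⟨k, hk1, hk2⟩ : ∃ k : ℤ,
            1 ≤ (2:ℝ) ^ k * |a.1 0| ∧ (2:ℝ) ^ k * |a.1 0| ≤ 2 := by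
          set t := Real.logb 2 |a.1 0| with ht
          refine ⟨-⌊t⌋, ?_, ?_⟩ <;>
            rw [show (2:ℝ) ^ (-⌊t⌋ : ℤ) * |a.1 0| = (2:ℝ) ^ (t - ⌊t⌋) by
              rw [← Real.rpow_intCast 2 (-⌊t⌋),
                ← Real.rpow_logb two_pos (by norm_num) habs, ← ht, ← Real.rpow_add two_pos]
              congr 1
              push_cast
              ring]
          · calc (1:ℝ) = (2:ℝ) ^ (0:ℝ) := (Real.rpow_zero 2).symm
              _ ≤ (2:ℝ) ^ (t - ⌊t⌋) := Real.rpow_le_rpow_of_exponent_le one_le_two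
                  (by have := Int.fract_nonneg t; rw [Int.fract] at this; linarith)
          · calc (2:ℝ) ^ (t - ⌊t⌋) ≤ (2:ℝ) ^ (1:ℝ) :=
                Real.rpow_le_rpow_of_exponent_le one_le_two
                  (by have := Int.fract_lt_one t; rw [Int.fract] at this; linarith)
              _ = 2 := Real.rpow_one 2
        have hPCmem : P k a.1 ∈ C := by
          rw [hCdef]
          have habsP : |P k a.1 0| = (2:ℝ) ^ k * |a.1 0| := by
            rw [hP0, abs_mul]
            congr 1
            rcases Int.even_or_odd k with ⟨l, hl⟩ | ⟨l, hl⟩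
            · rw [hl, show l + l = 2 * l by ring, hevenpow]
              exact abs_of_pos (zpow_pos two_pos _)
            · rw [hl, hoddpow, abs_neg]
              exact abs_of_pos (zpow_pos two_pos _)
          refine ⟨((hmem _).1 (hPmem k a.1 a.2)).1, ?_, ?_⟩
          · show (1:ℝ) ≤ |P k a.1 0|
            rw [habsP]; exact hk1
          · show |P k a.1 0| ≤ 2
            rw [habsP]; exact hk2
        exact ⟨⟨P k a.1, hPCmem⟩, (hQ a k).symm⟩
    rw [← hrange]
    exact isCompact_range hφ
  -- invariance of the full map
  have hFinv : ∀ a b : ↥Nu, bm ↑a = ↑b →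
      ((⟨z a, hzball a⟩, c a) :
        ↥(closedBall (0 : EuclideanSpace ℝ (Fin m)) 1) × Circle) = (⟨z b, hzball b⟩, c b) := by
    intro a b hab
    have h1 := hzinv a b hab
    have h2 := hcinv a b hab
    simp only [Prod.ext_iff, Subtype.ext_iff]
    exact ⟨h1, h2⟩
  -- assembling the homeomorphism
  show Nonempty (Quot (fun a b : ↥Nu => bm ↑a = ↑b) ≃ₜ
    (↥(Metric.closedBall (0 : EuclideanSpace ℝ (Fin m)) 1) × Circle))
  refine ⟨Continuous.homeoOfEquivCompactToT2 (f := Equiv.ofBijective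
    (Quot.lift (fun x : ↥Nu => ((⟨z x, hzball x⟩, c x) :
      ↥(closedBall (0 : EuclideanSpace ℝ (Fin m)) 1) × Circle)) hFinv) ⟨?_, ?_⟩) ?_⟩
  · -- injective
    intro q1 q2
    induction q1 using Quot.ind with
    | _ a =>
      induction q2 using Quot.ind with
      | _ b =>
        intro heq
        have h1 : z a = z b := congrArg (fun p => (p.1 :
          ↥(closedBall (0 : EuclideanSpace ℝ (Fin m)) 1)).1) heq
        have h2 : c a = c b := congrArg Prod.snd heq
        obtain ⟨k, hk⟩ := hkey a b h1 h2
        rw [hQ a k]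
        congr 1
        exact Subtype.ext hk.symm
  · -- surjective
    rintro ⟨⟨w, hw⟩, cc⟩
    obtain ⟨x, hx, hzx, hcx⟩ := hsurjcore w hw cc
    refine ⟨Quot.mk _ ⟨x, hx⟩, ?_⟩
    show ((⟨z ⟨x, hx⟩, hzball ⟨x, hx⟩⟩, c ⟨x, hx⟩) :
      ↥(closedBall (0 : EuclideanSpace ℝ (Fin m)) 1) × Circle) = (⟨w, hw⟩, cc)
    simp only [Prod.ext_iff, Subtype.ext_iff]
    exact ⟨hzx, hcx⟩
  · exact continuous_quot_lift _ ((hcz.subtype_mk hzball).prodMk hcc)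
end

section
/- Let n ≥ 4 and define b₊ : ℝⁿ → ℝⁿ by b₊(x₁, x₂, …, x_{n-1}, x_n) = (2x₁, x₂/2, …, x_{n-1}/2, x_n/2). Let 𝕌 = {x ∈ ℝⁿ : x₁²(x₂² + ⋯ + x_n²) ≤ 1} and ℕˢ = 𝕌 ∖ {x : x₂ = x₃ = ⋯ = x_n = 0} (the complement in 𝕌 of the x₁-axis); the set ℕˢ is invariant under b₊, and ℤ acts on ℕˢ by k · x = b₊^k(x). Then the quotient space ℕˢ/ℤ (with the quotient topology) is homeomorphic to the product S^{n-2} × S¹ × [−1, 1]. -/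
open Metric

namespace Stmt14Aux

variable {n : ℕ}

/-- embedding of `Fin (n-1)` into `Fin n` skipping `0`. -/
def emb (n : ℕ) (j : Fin (n - 1)) : Fin n := ⟨j.1 + 1, by have := j.2; omega⟩

lemma emb_ne_zero [NeZero n] (j : Fin (n - 1)) : emb n j ≠ 0 := by
  intro h
  have := congrArg Fin.val h
  simp [emb, Fin.val_zero] at this

/-- the part of `x` away from coordinate 0. -/
def yv (n : ℕ) (x : EuclideanSpace ℝ (Fin n)) : EuclideanSpace ℝ (Fin (n - 1)) :=
  WithLp.toLp 2 (fun j => x (emb n j))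

lemma sum_eq [NeZero n] (hn : 2 ≤ n) (x : EuclideanSpace ℝ (Fin n)) :
    ∑ i ∈ Finset.univ.filter (fun i : Fin n => i ≠ 0), (x i) ^ 2
      = ∑ j : Fin (n - 1), (yv n x j) ^ 2 := by
  refine Finset.sum_nbij' (i := fun i : Fin n => (⟨i.1 - 1, by have := i.2; omega⟩ : Fin (n - 1)))
    (j := fun j => emb n j) ?_ ?_ ?_ ?_ ?_
  · intro a ha; simp
  · intro a ha; simp [emb_ne_zero]
  · intro a ha
    simp only [Finset.mem_filter] at ha
    have h0 : a.1 ≠ 0 := by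
      intro h; exact ha.2 (Fin.ext (by simpa using h))
    apply Fin.ext
    simp [emb]
    omega
  · intro a ha; apply Fin.ext; simp [emb]
  · intro a ha
    simp only [Finset.mem_filter] at ha
    have h0 : a.1 ≠ 0 := by
      intro h; exact ha.2 (Fin.ext (by simpa using h))
    simp only [yv, PiLp.toLp_apply]
    have : emb n (⟨a.1 - 1, by have := a.2; omega⟩ : Fin (n-1)) = a := by
      apply Fin.ext; simp [emb]; omega
    rw [this]

lemma norm_yv_sq [NeZero n] (x : EuclideanSpace ℝ (Fin n)) :
    ‖yv n x‖ ^ 2 = ∑ j : Fin (n - 1), (yv n x j) ^ 2 := by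
  rw [EuclideanSpace.norm_eq, Real.sq_sqrt]
  · simp [sq_abs]
  · positivity

end Stmt14Aux

namespace Stmt14Aux

variable {n : ℕ}

lemma exists_emb [NeZero n] {i : Fin n} (hi : i ≠ 0) : ∃ j, i = emb n j := by
  have h0 : i.1 ≠ 0 := by
    intro h; exact hi (Fin.ext (by simpa using h))
  refine ⟨⟨i.1 - 1, by have := i.2; omega⟩, ?_⟩
  apply Fin.ext; simp [emb]; omega

/-- the map `b₊`. -/
noncomputable def bpF (n : ℕ) [NeZero n] (x : EuclideanSpace ℝ (Fin n)) : EuclideanSpace ℝ (Fin n) :=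
  WithLp.toLp 2 (fun i : Fin n => if i = 0 then 2 * x 0 else x i / 2)

lemma yv_bpF [NeZero n] (x : EuclideanSpace ℝ (Fin n)) :
    yv n (bpF n x) = (2⁻¹ : ℝ) • yv n x := by
  ext j
  simp [yv, bpF, emb_ne_zero, PiLp.smul_apply, smul_eq_mul]
  ring

lemma norm_yv_bpF [NeZero n] (x : EuclideanSpace ℝ (Fin n)) :
    ‖yv n (bpF n x)‖ = ‖yv n x‖ / 2 := by
  rw [yv_bpF, norm_smul]
  simp
  ring

lemma bpF_iterate [NeZero n] (k : ℕ) (x : EuclideanSpace ℝ (Fin n)) :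
    (bpF n)^[k] x = fun i : Fin n => if i = 0 then 2 ^ k * x 0 else x i / 2 ^ k := by
  induction k with
  | zero => funext i; by_cases h : i = 0 <;> simp [h] <;> rw [h]
  | succ k ih =>
    rw [Function.iterate_succ', Function.comp_apply]
    show (fun i => if i = 0 then 2 * ((bpF n)^[k] x) 0 else ((bpF n)^[k] x) i / 2) = _
    rw [ih]
    funext i
    by_cases h : i = 0 <;> simp [bpF, h, pow_succ] <;> ring

end Stmt14Aux

namespace Stmt14Aux

variable {n : ℕ}

lemma axis_iff [NeZero n] (x : EuclideanSpace ℝ (Fin n)) :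
    (∀ i : Fin n, i ≠ 0 → x i = 0) ↔ yv n x = 0 := by
  constructor
  · intro h; ext j; exact h _ (emb_ne_zero j)
  · intro h i hi
    obtain ⟨j, rfl⟩ := exists_emb hi
    exact congrArg (fun v : EuclideanSpace ℝ (Fin (n - 1)) => v j) h

end Stmt14Aux

open Stmt14Aux in
set_option maxHeartbeats 1000000 in
/-- Let `n ≥ 4` and define `b₊ : ℝⁿ → ℝⁿ` by
`b₊(x₁, x₂, …, x_{n-1}, x_n) = (2x₁, x₂/2, …, x_{n-1}/2, x_n/2)`. Let
`𝕌 = {x ∈ ℝⁿ : x₁²(x₂² + ⋯ + x_n²) ≤ 1}` and `ℕˢ = 𝕌 ∖ {x : x₂ = ⋯ = x_n = 0}` (the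
complement in `𝕌` of the `x₁`-axis); the set `ℕˢ` is invariant under `b₊`, and `ℤ` acts on
`ℕˢ` by `k · x = b₊^k(x)`. Then the quotient space `ℕˢ/ℤ` is homeomorphic to the product
`S^{n-2} × S¹ × [−1, 1]`. -/
theorem stmt_14 (n : ℕ) (hn : 4 ≤ n) [NeZero n]
    (bp : EuclideanSpace ℝ (Fin n) → EuclideanSpace ℝ (Fin n))
    (hbp : bp = fun x => WithLp.toLp 2 (fun i : Fin n => if i = 0 then 2 * x 0 else x i / 2))
    (U Ns : Set (EuclideanSpace ℝ (Fin n)))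
    (hU : U = {x | (x 0) ^ 2 *
      (∑ i ∈ Finset.univ.filter (fun i : Fin n => i ≠ 0), (x i) ^ 2) ≤ 1})
    (hNs : Ns = U \ {x | ∀ i : Fin n, i ≠ 0 → x i = 0}) :
    Nonempty (Quot (fun a b : ↥Ns => bp ↑a = ↑b) ≃ₜ
      (↥(Metric.sphere (0 : EuclideanSpace ℝ (Fin (n - 1))) 1) × Circle ×
        ↥(Set.Icc (-1 : ℝ) 1))) := by
  have hn2 : 2 ≤ n := by omega
  have hbp' : bp = bpF n := by rw [hbp]; rfl
  -- membership characterization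
  have hmem : ∀ x : EuclideanSpace ℝ (Fin n),
      x ∈ Ns ↔ ((x 0) ^ 2 * ‖yv n x‖ ^ 2 ≤ 1 ∧ yv n x ≠ 0) := by
    intro x
    rw [hNs, hU, Set.mem_diff, Set.mem_setOf_eq, Set.mem_setOf_eq,
      sum_eq hn2 x, ← norm_yv_sq x, axis_iff x]
  have rpos : ∀ x : EuclideanSpace ℝ (Fin n), x ∈ Ns → 0 < ‖yv n x‖ := by
    intro x hx
    exact norm_pos_iff.2 ((hmem x).1 hx).2
  -- invariance of Ns under bp
  have hbpmem : ∀ x : EuclideanSpace ℝ (Fin n), x ∈ Ns → bpF n x ∈ Ns := by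
    intro x hx
    rw [hmem] at hx ⊢
    obtain ⟨h1, h2⟩ := hx
    constructor
    · have h0 : (bpF n x) 0 = 2 * x 0 := by simp [bpF]
      rw [h0, norm_yv_bpF]
      calc (2 * x 0) ^ 2 * (‖yv n x‖ / 2) ^ 2 = (x 0) ^ 2 * ‖yv n x‖ ^ 2 := by ring
        _ ≤ 1 := h1
    · rw [yv_bpF]
      simpa using h2
  set c : ℝ := 2 * Real.pi / Real.log 2 with hc
  have hlog2 : Real.log 2 ≠ 0 := ne_of_gt (Real.log_pos (by norm_num))
  have hpi : (0:ℝ) < Real.pi := Real.pi_pos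
  have hcne : c ≠ 0 := div_ne_zero (by positivity) hlog2
  have hsph : ∀ a : ↥Ns, (‖yv n a.1‖)⁻¹ • yv n a.1
      ∈ Metric.sphere (0 : EuclideanSpace ℝ (Fin (n - 1))) 1 := by
    intro a
    have h := rpos a.1 a.2
    rw [mem_sphere_zero_iff_norm, norm_smul, norm_inv, norm_norm]
    field_simp
  have hicc : ∀ a : ↥Ns, a.1 0 * ‖yv n a.1‖ ∈ Set.Icc (-1 : ℝ) 1 := by
    intro a
    have h := ((hmem a.1).1 a.2).1
    have h2 : (a.1 0 * ‖yv n a.1‖) ^ 2 ≤ 1 := by rw [mul_pow]; exact h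
    rw [sq_le_one_iff_abs_le_one] at h2
    exact Set.mem_Icc.2 (abs_le.1 h2)
  set f : ↥Ns → (↥(Metric.sphere (0 : EuclideanSpace ℝ (Fin (n - 1))) 1) × Circle ×
      ↥(Set.Icc (-1 : ℝ) 1)) := fun a =>
    (⟨(‖yv n a.1‖)⁻¹ • yv n a.1, hsph a⟩,
     Circle.exp (c * Real.log ‖yv n a.1‖),
     ⟨a.1 0 * ‖yv n a.1‖, hicc a⟩) with hf
  -- invariance of f
  have hfbp : ∀ (x : EuclideanSpace ℝ (Fin n)) (hx : x ∈ Ns),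
      f ⟨bpF n x, hbpmem x hx⟩ = f ⟨x, hx⟩ := by
    intro x hx
    have hr := rpos x hx
    refine Prod.ext ?_ (Prod.ext ?_ ?_)
    · apply Subtype.ext
      show (‖yv n (bpF n x)‖)⁻¹ • yv n (bpF n x) = (‖yv n x‖)⁻¹ • yv n x
      rw [norm_yv_bpF, yv_bpF, smul_smul]
      congr 1
      field_simp
    · show Circle.exp (c * Real.log ‖yv n (bpF n x)‖) = Circle.exp (c * Real.log ‖yv n x‖)
      rw [norm_yv_bpF, Real.log_div (ne_of_gt hr) (by norm_num)]
      apply Circle.exp_eq_exp.2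
      refine ⟨-1, ?_⟩
      have : c * Real.log 2 = 2 * Real.pi := by
        rw [hc]; field_simp
      push_cast
      nlinarith [this]
    · apply Subtype.ext
      show (bpF n x) 0 * ‖yv n (bpF n x)‖ = x 0 * ‖yv n x‖
      have h0 : (bpF n x) 0 = 2 * x 0 := by simp [bpF]
      rw [h0, norm_yv_bpF]
      ring
  set R : ↥Ns → ↥Ns → Prop := fun a b => bp ↑a = ↑b with hR
  have hiter_mem : ∀ (k : ℕ) (x : EuclideanSpace ℝ (Fin n)), x ∈ Ns → (bpF n)^[k] x ∈ Ns := by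
    intro k
    induction k with
    | zero => intro x hx; simpa using hx
    | succ k ih =>
      intro x hx
      rw [Function.iterate_succ', Function.comp_apply]
      exact hbpmem _ (ih x hx)
  have hge : ∀ (k : ℕ) (a b : ↥Ns), ((b : EuclideanSpace ℝ (Fin n)) = (bpF n)^[k] ↑a) →
      Relation.EqvGen R a b := by
    intro k
    induction k with
    | zero =>
      intro a b h
      rw [Function.iterate_zero, id_eq] at h
      rw [show b = a from Subtype.ext h]
      exact Relation.EqvGen.refl a
    | succ k ih =>
      intro a b h
      rw [Function.iterate_succ', Function.comp_apply] at h
      have hc' : (bpF n)^[k] (a : EuclideanSpace ℝ (Fin n)) ∈ Ns := hiter_mem k _ a.2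
      refine Relation.EqvGen.trans _ _ _ (ih a ⟨_, hc'⟩ rfl) (Relation.EqvGen.rel _ _ ?_)
      show bp ((bpF n)^[k] (a : EuclideanSpace ℝ (Fin n))) = (b : EuclideanSpace ℝ (Fin n))
      rw [hbp']
      exact h.symm
  have hrel : ∀ (k : ℤ) (a b : ↥Ns),
      ((b : EuclideanSpace ℝ (Fin n)) =
        WithLp.toLp 2 (fun i : Fin n => if i = 0 then 2 ^ k * (a : EuclideanSpace ℝ (Fin n)) 0
          else (a : EuclideanSpace ℝ (Fin n)) i / 2 ^ k)) → Relation.EqvGen R a b := by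
    intro k a b h
    rcases le_or_gt 0 k with hk | hk
    · apply hge k.toNat
      rw [h]
      ext i
      rw [bpF_iterate]
      simp only [PiLp.toLp_apply]
      have h2 : ((2:ℝ) ^ k.toNat : ℝ) = (2:ℝ) ^ k := by
        rw [← zpow_natCast, Int.toNat_of_nonneg hk]
      rw [h2]
    · apply Relation.EqvGen.symm
      apply hge (-k).toNat
      ext i
      rw [bpF_iterate]
      have h2 : ((2:ℝ) ^ (-k).toNat : ℝ) = (2:ℝ) ^ (-k) := by
        rw [← zpow_natCast, Int.toNat_of_nonneg (by omega)]
      have hbi := congrArg (fun v : EuclideanSpace ℝ (Fin n) => v i) h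
      simp only [PiLp.toLp_apply] at hbi
      have h2k : (2:ℝ) ^ k ≠ 0 := zpow_ne_zero _ (by norm_num)
      simp only [h2]
      by_cases hi : i = 0
      · rw [if_pos hi] at hbi ⊢
        rw [hi] at hbi ⊢
        rw [hbi, zpow_neg]
        field_simp
      · rw [if_neg hi] at hbi ⊢
        rw [hbi, zpow_neg]
        field_simp
  have hinj : ∀ a b : ↥Ns, f a = f b → Relation.EqvGen R a b := by
    intro a b hab
    set ra := ‖yv n (a : EuclideanSpace ℝ (Fin n))‖ with hra
    set rb := ‖yv n (b : EuclideanSpace ℝ (Fin n))‖ with hrb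
    have hrapos : 0 < ra := rpos _ a.2
    have hrbpos : 0 < rb := rpos _ b.2
    have h1 : ra⁻¹ • yv n (a : EuclideanSpace ℝ (Fin n))
        = rb⁻¹ • yv n (b : EuclideanSpace ℝ (Fin n)) :=
      Subtype.ext_iff.1 (congrArg Prod.fst hab)
    have h2 : Circle.exp (c * Real.log ra) = Circle.exp (c * Real.log rb) :=
      congrArg (fun p => p.2.1) hab
    have h3 : (a : EuclideanSpace ℝ (Fin n)) 0 * ra
        = (b : EuclideanSpace ℝ (Fin n)) 0 * rb :=
      Subtype.ext_iff.1 (congrArg (fun p => p.2.2) hab)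
    obtain ⟨m, hm⟩ := Circle.exp_eq_exp.1 h2
    have hc2 : c * Real.log 2 = 2 * Real.pi := by rw [hc]; field_simp
    have hkey : Real.log ra = Real.log rb + m * Real.log 2 := by
      refine mul_left_cancel₀ hcne ?_
      calc c * Real.log ra = c * Real.log rb + m * (2 * Real.pi) := hm
        _ = c * Real.log rb + m * (c * Real.log 2) := by rw [hc2]
        _ = c * (Real.log rb + m * Real.log 2) := by ring
    have hexp : Real.exp ((m : ℝ) * Real.log 2) = (2:ℝ) ^ m := by
      rw [← Real.rpow_intCast 2 m, Real.rpow_def_of_pos (by norm_num), mul_comm]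
    have hr2 : ra = rb * (2:ℝ) ^ m := by
      have h := congrArg Real.exp hkey
      rwa [Real.exp_log hrapos, Real.exp_add, Real.exp_log hrbpos, hexp] at h
    have h2m : (0:ℝ) < (2:ℝ) ^ m := zpow_pos (by norm_num) m
    have h1' : yv n (a : EuclideanSpace ℝ (Fin n))
        = ((2:ℝ) ^ m) • yv n (b : EuclideanSpace ℝ (Fin n)) := by
      have h := (inv_smul_eq_iff₀ (ne_of_gt hrapos)).1 h1
      rw [h, smul_smul, hr2]
      congr 1
      field_simp
    apply hrel m a b
    ext i
    simp only [PiLp.toLp_apply]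
    by_cases hi : i = 0
    · rw [if_pos hi, hi]
      have : (a : EuclideanSpace ℝ (Fin n)) 0 = (b : EuclideanSpace ℝ (Fin n)) 0 * rb / ra := by
        field_simp at h3 ⊢
        linarith [h3]
      rw [this, hr2]
      field_simp
    · rw [if_neg hi]
      obtain ⟨j, rfl⟩ := exists_emb hi
      have := congrArg (fun v : EuclideanSpace ℝ (Fin (n - 1)) => v j) h1'
      simp only [PiLp.smul_apply, smul_eq_mul] at this
      show (b : EuclideanSpace ℝ (Fin n)) (emb n j)
        = (a : EuclideanSpace ℝ (Fin n)) (emb n j) / 2 ^ m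
      rw [show (a : EuclideanSpace ℝ (Fin n)) (emb n j) = yv n (a : EuclideanSpace ℝ (Fin n)) j from rfl, this]
      field_simp [yv]
      rfl
  have hsurj : ∀ p : (↥(Metric.sphere (0 : EuclideanSpace ℝ (Fin (n - 1))) 1) × Circle ×
      ↥(Set.Icc (-1 : ℝ) 1)), ∃ a : ↥Ns, f a = p := by
    rintro ⟨⟨w, hw⟩, z, ⟨t, ht⟩⟩
    have hw1 : ‖w‖ = 1 := by rwa [mem_sphere_zero_iff_norm] at hw
    obtain ⟨ht1, ht2⟩ := Set.mem_Icc.1 ht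
    set θ := Complex.arg (z : ℂ) with hθ
    set r0 := Real.exp (θ / c) with hr0def
    have hr0pos : 0 < r0 := Real.exp_pos _
    set x : EuclideanSpace ℝ (Fin n) := WithLp.toLp 2 (fun i : Fin n =>
      if h : i = 0 then t / r0 else r0 * w ⟨i.1 - 1, by have := i.2; omega⟩) with hxdef
    have hyx : yv n x = r0 • w := by
      ext j
      have hje : (emb n j) ≠ 0 := emb_ne_zero j
      simp only [yv, hxdef, PiLp.toLp_apply, dif_neg hje, PiLp.smul_apply, smul_eq_mul]
      exact congrArg (fun i => r0 * w i) (Fin.ext (by simp [emb]))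
    have hx0 : x 0 = t / r0 := by simp [hxdef]
    have hnx : ‖yv n x‖ = r0 := by
      rw [hyx, norm_smul, hw1]
      simp [abs_of_pos hr0pos]
    have hxNs : x ∈ Ns := by
      rw [hmem]
      constructor
      · rw [hnx, hx0]
        have ht3 : t ^ 2 ≤ 1 := by
          rw [sq_le_one_iff_abs_le_one]; exact abs_le.2 ⟨ht1, ht2⟩
        calc (t / r0) ^ 2 * r0 ^ 2 = t ^ 2 := by field_simp
          _ ≤ 1 := ht3
      · rw [hyx]
        intro hcon
        rcases smul_eq_zero.1 hcon with h | h
        · exact (ne_of_gt hr0pos) h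
        · rw [h] at hw1; simp at hw1
    refine ⟨⟨x, hxNs⟩, ?_⟩
    refine Prod.ext ?_ (Prod.ext ?_ ?_)
    · apply Subtype.ext
      show (‖yv n x‖)⁻¹ • yv n x = w
      rw [hnx, hyx, smul_smul, inv_mul_cancel₀ (ne_of_gt hr0pos), one_smul]
    · show Circle.exp (c * Real.log ‖yv n x‖) = z
      rw [hnx, hr0def, Real.log_exp, show c * (θ / c) = θ by field_simp, hθ]
      exact Circle.exp_arg z
    · apply Subtype.ext
      show x 0 * ‖yv n x‖ = t
      rw [hx0, hnx]
      field_simp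
  -- lift to the quotient
  have hcomp : ∀ a b : ↥Ns, R a b → f a = f b := by
    intro a b hab
    have hb : b = ⟨bpF n ↑a, hbpmem _ a.2⟩ := Subtype.ext (by rw [← hab, hbp'])
    rw [hb, hfbp ↑a a.2]
  set F : Quot R → (↥(Metric.sphere (0 : EuclideanSpace ℝ (Fin (n - 1))) 1) × Circle ×
      ↥(Set.Icc (-1 : ℝ) 1)) := Quot.lift f hcomp with hF
  have hFbij : Function.Bijective F := by
    constructor
    · intro q q'
      induction q using Quot.ind with | _ a =>
      induction q' using Quot.ind with | _ b =>
      intro h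
      exact Quot.eqvGen_sound (hinj a b h)
    · intro p
      obtain ⟨a, ha⟩ := hsurj p
      exact ⟨Quot.mk R a, ha⟩
  -- continuity
  have hyc : Continuous (yv n) := by
    exact (PiLp.continuous_toLp _ _).comp (continuous_pi fun j => PiLp.continuous_apply _ _ (emb n j))
  have hrc : Continuous fun a : ↥Ns => ‖yv n (a : EuclideanSpace ℝ (Fin n))‖ :=
    (hyc.comp continuous_subtype_val).norm
  have hrne : ∀ a : ↥Ns, ‖yv n (a : EuclideanSpace ℝ (Fin n))‖ ≠ 0 :=
    fun a => ne_of_gt (rpos _ a.2)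
  have hfc : Continuous f := by
    refine Continuous.prodMk ?_ (Continuous.prodMk ?_ ?_)
    · apply Continuous.subtype_mk
      exact (hrc.inv₀ hrne).smul (hyc.comp continuous_subtype_val)
    · refine (Circle.exp.continuous).comp ?_
      exact Continuous.mul continuous_const (hrc.log hrne)
    · apply Continuous.subtype_mk
      exact ((PiLp.continuous_apply _ _ (0 : Fin n)).comp continuous_subtype_val).mul hrc
  have hFc : Continuous F := continuous_quot_lift _ hfc
  -- compactness of the quotient
  set K₀ : Set (EuclideanSpace ℝ (Fin n)) :=
    {x | (x 0) ^ 2 * ‖yv n x‖ ^ 2 ≤ 1 ∧ ‖yv n x‖ ∈ Set.Icc (1:ℝ) 2} with hK0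
  have hK0Ns : K₀ ⊆ Ns := by
    intro x hx
    refine (hmem x).2 ⟨hx.1, fun h => ?_⟩
    have := hx.2.1
    rw [h, norm_zero] at this
    linarith
  have hclosed : IsClosed K₀ := by
    have c1 : Continuous fun x : EuclideanSpace ℝ (Fin n) => (x 0) ^ 2 * ‖yv n x‖ ^ 2 :=
      (((PiLp.continuous_apply _ _ (0 : Fin n)).pow 2).mul (hyc.norm.pow 2))
    have : K₀ = {x : EuclideanSpace ℝ (Fin n) | (x 0) ^ 2 * ‖yv n x‖ ^ 2 ≤ 1} ∩
        ((fun x => ‖yv n x‖) ⁻¹' Set.Icc (1:ℝ) 2) := rfl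
    rw [this]
    exact (isClosed_le c1 continuous_const).inter (isClosed_Icc.preimage hyc.norm)
  have hbound : K₀ ⊆ Metric.closedBall 0 3 := by
    intro x hx
    rw [Metric.mem_closedBall, dist_zero_right]
    have hsplit : ∑ i : Fin n, (x i) ^ 2 = (x 0) ^ 2 +
        ∑ i ∈ Finset.univ.filter (fun i : Fin n => i ≠ 0), (x i) ^ 2 := by
      rw [Finset.filter_ne']
      exact (Finset.add_sum_erase _ (fun i => x i ^ 2) (Finset.mem_univ (0 : Fin n))).symm
    have h1 : ‖x‖ ^ 2 = (x 0) ^ 2 + ‖yv n x‖ ^ 2 := by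
      rw [EuclideanSpace.norm_eq, Real.sq_sqrt (by positivity), norm_yv_sq, ← sum_eq hn2]
      simpa [sq_abs] using hsplit
    have hxa := hx.1
    have hxl := hx.2.1
    have hxu := hx.2.2
    have hr1 : 1 ≤ ‖yv n x‖ ^ 2 := by nlinarith
    have hx0 : (x 0) ^ 2 ≤ 1 := by
      nlinarith [mul_le_mul_of_nonneg_left hr1 (sq_nonneg (x 0))]
    have h9 : ‖x‖ ^ 2 ≤ 9 := by nlinarith
    nlinarith [norm_nonneg x]
  have hK0compact : IsCompact K₀ :=
    (isCompact_closedBall (0 : EuclideanSpace ℝ (Fin n)) 3).of_isClosed_subset hclosed hbound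
  set K : Set ↥Ns := Subtype.val ⁻¹' K₀ with hKdef
  have hKcomp : IsCompact K := by
    rw [Subtype.isCompact_iff, Set.image_preimage_eq_inter_range, Subtype.range_coe,
      Set.inter_eq_self_of_subset_left hK0Ns]
    exact hK0compact
  have hQsurj : ∀ q : Quot R, ∃ a ∈ K, Quot.mk R a = q := by
    intro q
    induction q using Quot.ind with | _ a =>
    have hrpos' := rpos _ a.2
    set r := ‖yv n (a : EuclideanSpace ℝ (Fin n))‖ with hrdef
    set k := Int.log 2 r with hkdef
    have hlow : (2:ℝ) ^ k ≤ r := Int.zpow_log_le_self (by norm_num) hrpos'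
    have hhigh : r < (2:ℝ) ^ (k + 1) := Int.lt_zpow_succ_log_self (by norm_num) r
    have h2k : (0:ℝ) < (2:ℝ) ^ k := zpow_pos (by norm_num) k
    set x' : EuclideanSpace ℝ (Fin n) := WithLp.toLp 2 (fun i : Fin n =>
      if i = 0 then 2 ^ k * (a : EuclideanSpace ℝ (Fin n)) 0
        else (a : EuclideanSpace ℝ (Fin n)) i / 2 ^ k) with hx'def
    have hyx' : yv n x' = ((2:ℝ) ^ k)⁻¹ • yv n (a : EuclideanSpace ℝ (Fin n)) := by
      ext j
      simp only [yv, hx'def, PiLp.toLp_apply, if_neg (emb_ne_zero j), PiLp.smul_apply, smul_eq_mul]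
      field_simp
    have hnx' : ‖yv n x'‖ = r / 2 ^ k := by
      rw [hyx', norm_smul, ← hrdef]
      rw [norm_inv, Real.norm_eq_abs, abs_of_pos h2k]
      field_simp
    have hx'Ns : x' ∈ Ns := by
      rw [hmem]
      constructor
      · have hx'0 : x' 0 = 2 ^ k * (a : EuclideanSpace ℝ (Fin n)) 0 := by simp [hx'def]
        rw [hx'0, hnx']
        have ha := ((hmem _).1 a.2).1
        calc (2 ^ k * (a : EuclideanSpace ℝ (Fin n)) 0) ^ 2 * (r / 2 ^ k) ^ 2
            = (a : EuclideanSpace ℝ (Fin n)) 0 ^ 2 * r ^ 2 := by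
              field_simp
          _ ≤ 1 := ha
      · intro hcon
        have := congrArg norm hcon
        rw [hnx', norm_zero] at this
        have : r = 0 := by
          field_simp at this
          simpa using this
        exact (ne_of_gt hrpos') this
    refine ⟨⟨x', hx'Ns⟩, ?_, ?_⟩
    · show x' ∈ K₀
      constructor
      · exact ((hmem _).1 hx'Ns).1
      · rw [hnx']
        constructor
        · rw [le_div_iff₀ h2k, one_mul]; exact hlow
        · rw [div_le_iff₀ h2k]
          calc r ≤ (2:ℝ) ^ (k+1) := le_of_lt hhigh
            _ = 2 * 2 ^ k := by rw [zpow_add₀ (by norm_num : (2:ℝ) ≠ 0), zpow_one]; ring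
    · exact (Quot.eqvGen_sound (hrel k a ⟨x', hx'Ns⟩ rfl)).symm
  have hcs : CompactSpace (Quot R) := by
    constructor
    have himg : (Set.univ : Set (Quot R)) = Quot.mk R '' K := by
      refine Set.eq_of_subset_of_subset (fun q _ => ?_) (Set.subset_univ _)
      obtain ⟨a, haK, hq⟩ := hQsurj q
      exact ⟨a, haK, hq⟩
    rw [himg]
    exact hKcomp.image continuous_quot_mk
  exact ⟨Continuous.homeoOfEquivCompactToT2 (f := Equiv.ofBijective F hFbij) hFc⟩
end
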